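/- arXiv:1812.09428 — 11 statements merged into one kernel-verified Lean document; each statement's English description precedes it below -/
import Mathlib

section
/- Let G be a finite group, V a finite-dimensional complex representation of G, and W a G-subrepresentation of the regular representation ℂ[G]. Define CM : V ⊗ ℂ[G] → V ⊗ ℂ[G] as the linear map determined by CM(v ⊗ g) = ρ(g⁻¹)v ⊗ g. Then there exists a G-subrepresentation Y of ℂ[G] such that the image of the subspace V ⊗ W under CM is contained in the subspace V ⊗ Y, and for every irreducible complex representation S of G, S appears in Y if and only if S appears in V ⊗ W. -/
open scoped TensorProduct

/-- The representation `Representation.ofMulAction k G H` as it was in the older Mathlib,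
on `H →₀ k` (Mathlib now puts it on the structure `MonoidAlgebra k H`). -/
noncomputable def oldOfMulAction (k : Type*) [Semiring k] (G : Type*) [Monoid G] (H : Type*)
    [MulAction G H] : Representation k G (H →₀ k) where
  toFun g := Finsupp.lmapDomain k k (g • ·)
  map_one' := by ext x y; simp [Finsupp.mapDomain_single]
  map_mul' x y := by ext z w; simp [Finsupp.mapDomain_single, mul_smul]

theorem oldOfMulAction_single {G : Type} [Group G] (g h : G) (c : ℂ) :
    oldOfMulAction ℂ G G g (Finsupp.single h c) = Finsupp.single (g • h) c := by
  simp [oldOfMulAction, Finsupp.mapDomain_single]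

namespace Stmt1Aux

variable {G : Type} [Group G] [Fintype G]
variable {V : Type} [AddCommGroup V] [Module ℂ V]

set_option linter.unusedSectionVars false

/-- Extensionality for maps out of `V ⊗ ℂ[G]` tested on `v ⊗ single g 1`. -/
theorem ext_single {T : Type*} [AddCommGroup T] [Module ℂ T]
    {A B : V ⊗[ℂ] (G →₀ ℂ) →ₗ[ℂ] T}
    (h : ∀ (v : V) (g : G),
      A (v ⊗ₜ[ℂ] Finsupp.single g 1) = B (v ⊗ₜ[ℂ] Finsupp.single g 1)) : A = B := by
  apply TensorProduct.ext
  apply LinearMap.ext; intro v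
  apply Finsupp.lhom_ext; intro g c
  have h1 : (Finsupp.single g c : G →₀ ℂ) = c • Finsupp.single g 1 := by
    rw [Finsupp.smul_single, smul_eq_mul, mul_one]
  simp only [h1, map_smul]
  simp only [LinearMap.compr₂ₛₗ_apply, TensorProduct.mk_apply, h v g]

/-- Coordinate projection `V ⊗ ℂ[G] → ℂ[G]` w.r.t. a basis vector of `V`. -/
noncomputable def pi {n : ℕ} (b : Module.Basis (Fin n) ℂ V) (i : Fin n) :
    V ⊗[ℂ] (G →₀ ℂ) →ₗ[ℂ] (G →₀ ℂ) :=
  TensorProduct.lift ((LinearMap.lsmul ℂ (G →₀ ℂ)) ∘ₗ (b.coord i))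

theorem pi_tmul {n : ℕ} (b : Module.Basis (Fin n) ℂ V) (i : Fin n) (v : V) (x : G →₀ ℂ) :
    pi b i (v ⊗ₜ[ℂ] x) = (b.coord i v) • x := by
  simp [pi]

/-- Reconstruction of a tensor from its coordinates. -/
theorem sum_pi {n : ℕ} (b : Module.Basis (Fin n) ℂ V) (x : V ⊗[ℂ] (G →₀ ℂ)) :
    ∑ i, b i ⊗ₜ[ℂ] pi b i x = x := by
  induction x using TensorProduct.induction_on with
  | zero => simp
  | tmul v y =>
      simp only [pi_tmul]
      have : ∀ i : Fin n, b i ⊗ₜ[ℂ] ((b.coord i v) • y)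
          = ((b.coord i v) • b i) ⊗ₜ[ℂ] y := by
        intro i; rw [TensorProduct.tmul_smul, TensorProduct.smul_tmul']
      rw [Finset.sum_congr rfl (fun i _ => this i), ← TensorProduct.sum_tmul]
      congr 1
      simpa [Module.Basis.coord_apply] using b.sum_repr v
  | add x y hx hy =>
      simp only [map_add, TensorProduct.tmul_add, Finset.sum_add_distrib, hx, hy]

/-- `pi` intertwines maps acting only on the right factor. -/
theorem pi_lTensor {n : ℕ} (b : Module.Basis (Fin n) ℂ V) (i : Fin n)
    (A : (G →₀ ℂ) →ₗ[ℂ] (G →₀ ℂ)) (x : V ⊗[ℂ] (G →₀ ℂ)) :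
    pi b i (LinearMap.lTensor V A x) = A (pi b i x) := by
  induction x using TensorProduct.induction_on with
  | zero => simp
  | tmul v y => simp [pi_tmul, LinearMap.lTensor_tmul]
  | add x y hx hy => simp [map_add, hx, hy]

/-- A left inverse for `CM`. -/
noncomputable def CMinv (ρ : Representation ℂ G V) :
    V ⊗[ℂ] (G →₀ ℂ) →ₗ[ℂ] V ⊗[ℂ] (G →₀ ℂ) :=
  TensorProduct.lift (LinearMap.flip (Finsupp.lsum ℂ (fun g =>
    LinearMap.toSpanSingleton ℂ (V →ₗ[ℂ] V ⊗[ℂ] (G →₀ ℂ))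
      (((TensorProduct.mk ℂ V (G →₀ ℂ)).flip (Finsupp.single g 1)) ∘ₗ (ρ g)))))

theorem CMinv_tmul_single (ρ : Representation ℂ G V) (v : V) (g : G) :
    CMinv ρ (v ⊗ₜ[ℂ] Finsupp.single g 1) = (ρ g v) ⊗ₜ[ℂ] Finsupp.single g 1 := by
  simp [CMinv]

theorem CMinv_CM (ρ : Representation ℂ G V)
    (CM : V ⊗[ℂ] (G →₀ ℂ) →ₗ[ℂ] V ⊗[ℂ] (G →₀ ℂ))
    (hCM : ∀ (v : V) (g : G),
      CM (v ⊗ₜ[ℂ] Finsupp.single g 1) = (ρ g⁻¹ v) ⊗ₜ[ℂ] Finsupp.single g 1)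
    (x : V ⊗[ℂ] (G →₀ ℂ)) : CMinv ρ (CM x) = x := by
  have h : (CMinv ρ) ∘ₗ CM = LinearMap.id := by
    refine ext_single (T := V ⊗[ℂ] (G →₀ ℂ)) fun v g => ?_
    rw [LinearMap.comp_apply, hCM, CMinv_tmul_single, LinearMap.id_apply,
      ← Module.End.mul_apply, ← map_mul, mul_inv_cancel, map_one, Module.End.one_apply]
  calc CMinv ρ (CM x) = ((CMinv ρ) ∘ₗ CM) x := rfl
    _ = x := by rw [h]; rfl

/-- `CM` conjugates the diagonal action to the action on the right factor. -/
theorem CM_diag (ρ : Representation ℂ G V)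
    (CM : V ⊗[ℂ] (G →₀ ℂ) →ₗ[ℂ] V ⊗[ℂ] (G →₀ ℂ))
    (hCM : ∀ (v : V) (g : G),
      CM (v ⊗ₜ[ℂ] Finsupp.single g 1) = (ρ g⁻¹ v) ⊗ₜ[ℂ] Finsupp.single g 1)
    (g : G) (x : V ⊗[ℂ] (G →₀ ℂ)) :
    CM ((ρ.tprod (oldOfMulAction ℂ G G)) g x)
      = LinearMap.lTensor V (oldOfMulAction ℂ G G g) (CM x) := by
  have h : CM ∘ₗ ((ρ.tprod (oldOfMulAction ℂ G G)) g)
      = (LinearMap.lTensor V (oldOfMulAction ℂ G G g)) ∘ₗ CM := by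
    refine ext_single (T := V ⊗[ℂ] (G →₀ ℂ)) fun v h => ?_
    simp only [LinearMap.comp_apply, Representation.tprod_apply, TensorProduct.map_tmul,
      oldOfMulAction_single, smul_eq_mul, hCM, LinearMap.lTensor_tmul]
    congr 1
    rw [← Module.End.mul_apply, ← map_mul]
    congr 1
    group
  calc CM ((ρ.tprod (oldOfMulAction ℂ G G)) g x)
      = (CM ∘ₗ ((ρ.tprod (oldOfMulAction ℂ G G)) g)) x := rfl
    _ = _ := by rw [h]; rfl

end Stmt1Aux


open Stmt1Aux

/-- Let `G` be a finite group, `V` a finite-dimensional complex representation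
of `G`, and `W` a `G`-subrepresentation of the regular representation `ℂ[G]`.  With
`CM (v ⊗ g) = ρ(g⁻¹)v ⊗ g` on `V ⊗ ℂ[G]`, there is a `G`-subrepresentation `Y` of `ℂ[G]`
such that `CM` maps the subspace `V ⊗ W` into `V ⊗ Y`, and an irreducible representation `S`
of `G` appears in `Y` (i.e. admits a nonzero equivariant map `S → Y`) if and only if it
appears in `V ⊗ W` (with the diagonal action on `V ⊗ ℂ[G]`). -/
theorem stmt1 {G : Type} [Group G] [Fintype G]
    {V : Type} [AddCommGroup V] [Module ℂ V] [FiniteDimensional ℂ V]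
    (ρ : Representation ℂ G V)
    (W : Submodule ℂ (G →₀ ℂ))
    (hW : ∀ (g : G), ∀ w ∈ W, oldOfMulAction ℂ G G g w ∈ W)
    (CM : V ⊗[ℂ] (G →₀ ℂ) →ₗ[ℂ] V ⊗[ℂ] (G →₀ ℂ))
    (hCM : ∀ (v : V) (g : G),
      CM (v ⊗ₜ[ℂ] Finsupp.single g 1) = (ρ g⁻¹ v) ⊗ₜ[ℂ] Finsupp.single g 1) :
    ∃ Y : Submodule ℂ (G →₀ ℂ),
      (∀ (g : G), ∀ y ∈ Y, oldOfMulAction ℂ G G g y ∈ Y) ∧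
      Submodule.map CM
          (LinearMap.range (TensorProduct.map (LinearMap.id : V →ₗ[ℂ] V) W.subtype))
        ≤ LinearMap.range (TensorProduct.map (LinearMap.id : V →ₗ[ℂ] V) Y.subtype) ∧
      ∀ (S : Type) [AddCommGroup S] [Module ℂ S] [FiniteDimensional ℂ S] [Nontrivial S]
        (σ : Representation ℂ G S),
        (∀ p : Submodule ℂ S, (∀ g : G, ∀ s ∈ p, σ g s ∈ p) → p = ⊥ ∨ p = ⊤) →
        ((∃ f : S →ₗ[ℂ] (G →₀ ℂ), f ≠ 0 ∧ LinearMap.range f ≤ Y ∧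
            ∀ (g : G) (s : S), f (σ g s) = oldOfMulAction ℂ G G g (f s))
          ↔ (∃ f : S →ₗ[ℂ] V ⊗[ℂ] (G →₀ ℂ), f ≠ 0 ∧
              LinearMap.range f ≤
                LinearMap.range (TensorProduct.map (LinearMap.id : V →ₗ[ℂ] V) W.subtype) ∧
              ∀ (g : G) (s : S),
                f (σ g s) = (ρ.tprod (oldOfMulAction ℂ G G)) g (f s))) := by
  classical
  set b : Module.Basis (Fin (Module.finrank ℂ V)) ℂ V := Module.finBasis ℂ V with hb
  set n := Module.finrank ℂ V
  set N := LinearMap.range (TensorProduct.map (LinearMap.id : V →ₗ[ℂ] V) W.subtype) with hNdef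
  -- N is invariant under the diagonal action
  have hNinv : ∀ (g : G) (x : V ⊗[ℂ] (G →₀ ℂ)), x ∈ N →
      (ρ.tprod (oldOfMulAction ℂ G G)) g x ∈ N := by
    intro g x hx
    obtain ⟨t, rfl⟩ := hx
    have hcomp : ((ρ.tprod (oldOfMulAction ℂ G G)) g) ∘ₗ
        (TensorProduct.map (LinearMap.id : V →ₗ[ℂ] V) W.subtype)
        = (TensorProduct.map (LinearMap.id : V →ₗ[ℂ] V) W.subtype) ∘ₗ
          (TensorProduct.map (ρ g)
            ((oldOfMulAction ℂ G G g).restrict (fun w hw => hW g w hw))) := by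
      apply TensorProduct.ext'
      intro v w
      simp [TensorProduct.map_tmul, Representation.tprod_apply, LinearMap.restrict_coe_apply]
    exact ⟨TensorProduct.map (ρ g)
      ((oldOfMulAction ℂ G G g).restrict (fun w hw => hW g w hw)) t,
      (LinearMap.congr_fun hcomp t).symm⟩
  set q : (Fin n → N) →ₗ[ℂ] (G →₀ ℂ) :=
    ∑ i, (pi b i) ∘ₗ CM ∘ₗ N.subtype ∘ₗ LinearMap.proj i with hqdef
  have hq : ∀ m : Fin n → N, q m = ∑ i, pi b i (CM ((m i : V ⊗[ℂ] (G →₀ ℂ)))) := by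
    intro m
    simp [hqdef, LinearMap.sum_apply]
  have hYmem : ∀ x ∈ N, ∀ i, pi b i (CM x) ∈ LinearMap.range q := by
    intro x hx i
    refine ⟨Pi.single i ⟨x, hx⟩, ?_⟩
    rw [hq, Finset.sum_eq_single i]
    · simp
    · intro j _ hj
      simp [Pi.single_eq_of_ne hj]
    · intro hi; exact absurd (Finset.mem_univ i) hi
  -- the restricted diagonal action on N
  set dgN : G → (N →ₗ[ℂ] N) := fun g =>
    ((ρ.tprod (oldOfMulAction ℂ G G)) g).restrict
      (fun x hx => hNinv g x hx) with hdgNdef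
  have hdgN : ∀ (g : G) (x : N),
      ((dgN g x : V ⊗[ℂ] (G →₀ ℂ))) = (ρ.tprod (oldOfMulAction ℂ G G)) g x := by
    intro g x; simp [hdgNdef, LinearMap.restrict_coe_apply]
  have hqdg : ∀ (g : G) (m : Fin n → N),
      q (fun i => dgN g (m i)) = oldOfMulAction ℂ G G g (q m) := by
    intro g m
    rw [hq, hq, map_sum]
    refine Finset.sum_congr rfl fun i _ => ?_
    rw [hdgN, CM_diag ρ CM hCM, pi_lTensor]
  refine ⟨LinearMap.range q, ?_, ?_, ?_⟩
  · -- invariance of Y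
    rintro g y ⟨m, rfl⟩
    exact ⟨fun i => dgN g (m i), hqdg g m⟩
  · -- CM maps V ⊗ W into V ⊗ Y
    rintro x ⟨y, hy, rfl⟩
    refine ⟨∑ i, b i ⊗ₜ[ℂ] (⟨pi b i (CM y), hYmem y hy i⟩ : (LinearMap.range q)), ?_⟩
    rw [map_sum]
    simp only [TensorProduct.map_tmul, LinearMap.id_coe, id_eq, Submodule.coe_subtype]
    exact sum_pi b (CM y)
  · -- the appearance condition
    intro S _ _ _ _ σ _
    constructor
    · -- from Y to V ⊗ W, by averaging
      rintro ⟨f, hf0, hfY, hfe⟩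
      set e := Module.Basis.ofVectorSpace ℂ S with hedef
      have hch : ∀ j, ∃ m : Fin n → N, q m = f (e j) :=
        fun j => hfY (LinearMap.mem_range_self f (e j))
      choose m0 hm0 using hch
      set F0 : S →ₗ[ℂ] (Fin n → N) := e.constr ℂ m0 with hF0def
      have hqF0 : ∀ s, q (F0 s) = f s := by
        have hcomp : q ∘ₗ F0 = f := by
          apply e.ext; intro j
          simp only [LinearMap.comp_apply, hF0def, Module.Basis.constr_basis, hm0]
        intro s; exact LinearMap.congr_fun hcomp s
      -- componentwise diagonal action on `Fin n → N`
      set A : G → ((Fin n → N) →ₗ[ℂ] (Fin n → N)) := fun g =>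
        LinearMap.pi (fun i => (dgN g) ∘ₗ LinearMap.proj i) with hAdef
      have hA_apply : ∀ g m i, (A g m) i = dgN g (m i) := by
        intro g m i; simp [hAdef]
      have hqA : ∀ g m, q (A g m) = oldOfMulAction ℂ G G g (q m) := by
        intro g m
        have : (fun i => (A g m) i) = fun i => dgN g (m i) := funext fun i => hA_apply g m i
        calc q (A g m) = q (fun i => dgN g (m i)) := by rw [← this]
          _ = _ := hqdg g m
      have hAmul : ∀ g₁ g₂ m, A (g₁ * g₂) m = A g₁ (A g₂ m) := by
        intro g₁ g₂ m
        funext i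
        apply Subtype.ext
        rw [hA_apply, hA_apply, hA_apply, hdgN, hdgN, hdgN, ← Module.End.mul_apply, ← map_mul]
      set c : ℂ := (Fintype.card G : ℂ)⁻¹ with hcdef
      set F : S →ₗ[ℂ] (Fin n → N) :=
        c • ∑ g : G, (A g⁻¹) ∘ₗ F0 ∘ₗ (σ g : S →ₗ[ℂ] S) with hFdef
      have hF_apply : ∀ s, F s = c • ∑ g : G, A g⁻¹ (F0 (σ g s)) := by
        intro s; simp [hFdef, LinearMap.sum_apply]
      have hqF : ∀ s, q (F s) = f s := by
        intro s
        rw [hF_apply, map_smul, map_sum]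
        have hterm : ∀ g : G, q (A g⁻¹ (F0 (σ g s))) = f s := by
          intro g
          rw [hqA, hqF0, hfe, ← Module.End.mul_apply, ← map_mul, inv_mul_cancel, map_one,
            Module.End.one_apply]
        rw [Finset.sum_congr rfl (fun g _ => hterm g), Finset.sum_const, Finset.card_univ,
          ← Nat.cast_smul_eq_nsmul ℂ, smul_smul, hcdef,
          inv_mul_cancel₀ (Nat.cast_ne_zero.mpr Fintype.card_ne_zero), one_smul]
      have hFequi : ∀ (h : G) (s : S), F (σ h s) = A h (F s) := by
        intro h s
        rw [hF_apply, hF_apply, map_smul, map_sum]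
        congr 1
        refine Fintype.sum_equiv (Equiv.mulRight h) _ _ ?_
        intro g
        simp only [Equiv.coe_mulRight]
        rw [← hAmul]
        have h1 : h * (g * h)⁻¹ = g⁻¹ := by group
        have h2 : σ (g * h) s = σ g (σ h s) := by rw [map_mul, Module.End.mul_apply]
        rw [h1, h2]
      have hFne : ∃ (i : Fin n) (s : S), F s i ≠ 0 := by
        by_contra hc
        push_neg at hc
        apply hf0
        apply LinearMap.ext; intro s
        have hz : F s = 0 := funext fun i => hc i s
        rw [LinearMap.zero_apply, ← hqF s, hz, map_zero]
      obtain ⟨i, s0, hs0⟩ := hFne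
      refine ⟨N.subtype ∘ₗ (LinearMap.proj i) ∘ₗ F, ?_, ?_, ?_⟩
      · intro h0
        apply hs0
        have h1 := LinearMap.congr_fun h0 s0
        simpa using h1
      · rintro x ⟨s, rfl⟩
        simp only [LinearMap.comp_apply, Submodule.subtype_apply, LinearMap.proj_apply]
        exact SetLike.coe_mem (F s i)
      · intro g s
        simp only [LinearMap.comp_apply, Submodule.subtype_apply, LinearMap.proj_apply]
        rw [hFequi g s]
        rw [show (A g (F s)) i = dgN g (F s i) from hA_apply g (F s) i, hdgN]
    · -- from V ⊗ W to Y, by coordinate projections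
      rintro ⟨f, hf0, hfN, hfe⟩
      have hne : ∃ (i : Fin n) (s : S), pi b i (CM (f s)) ≠ 0 := by
        by_contra hc
        push_neg at hc
        apply hf0
        apply LinearMap.ext; intro s
        have h1 : CM (f s) = 0 := by
          rw [← sum_pi b (CM (f s))]
          refine Finset.sum_eq_zero fun i _ => ?_
          rw [hc i s, TensorProduct.tmul_zero]
        have h2 := CMinv_CM ρ CM hCM (f s)
        rw [h1, map_zero] at h2
        rw [LinearMap.zero_apply, ← h2]
      obtain ⟨i, s0, hs0⟩ := hne
      refine ⟨(pi b i) ∘ₗ CM ∘ₗ f, ?_, ?_, ?_⟩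
      · intro h0; exact hs0 (by simpa using LinearMap.congr_fun h0 s0)
      · rintro x ⟨s, rfl⟩
        simp only [LinearMap.comp_apply]
        exact hYmem (f s) (hfN (LinearMap.mem_range_self f s)) i
      · intro g s
        simp only [LinearMap.comp_apply]
        rw [hfe, CM_diag ρ CM hCM, pi_lTensor]
end

section
/- Let G be a finite group, V a finite-dimensional complex inner product space carrying a unitary representation ρ of G, H ≤ G a subgroup, and Y ⊆ V an H-invariant subspace that is irreducible as a representation of H. Assume V is induced from Y, i.e., for g, g' ∈ G the subspaces ρ(g)Y and ρ(g')Y are equal if gH = g'H, are pairwise orthogonal if gH ≠ g'H, and together span V. Let E denote orthogonal projection onto Y, and let W ⊆ V be a nonzero G-invariant subspace. Then there exists a unit vector ψ ∈ W with ⟨ψ, Eψ⟩ = dim W / dim V. -/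
open scoped ComplexInnerProductSpace

private lemma proj_comm' {V : Type} [NormedAddCommGroup V] [InnerProductSpace ℂ V]
    [FiniteDimensional ℂ V] (U : Submodule ℂ V) (f finv : V →ₗ[ℂ] V)
    (hfi : ∀ v, f (finv v) = v)
    (hf : ∀ v w : V, ⟪f v, f w⟫ = ⟪v, w⟫)
    (hU : ∀ u ∈ U, f u ∈ U) (hU' : ∀ u ∈ U, finv u ∈ U) (v : V) :
    (U.orthogonalProjection (f v) : V) = f (U.orthogonalProjection v) := by
  apply Submodule.eq_starProjection_of_mem_of_inner_eq_zero
  · exact hU _ (U.orthogonalProjection v).2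
  · intro w hw
    rw [← map_sub]
    calc ⟪f (v - (U.orthogonalProjection v : V)), w⟫
        = ⟪f (v - (U.orthogonalProjection v : V)), f (finv w)⟫ := by rw [hfi]
      _ = ⟪v - (U.orthogonalProjection v : V), finv w⟫ := hf _ _
      _ = 0 := Submodule.starProjection_inner_eq_zero v _ (hU' w hw)

private lemma trace_proj {V : Type} [NormedAddCommGroup V] [InnerProductSpace ℂ V]
    [FiniteDimensional ℂ V] (U : Submodule ℂ V) :
    LinearMap.trace ℂ V (U.subtype ∘ₗ (U.orthogonalProjection).toLinearMap)
      = (Module.finrank ℂ U : ℂ) := by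
  rw [LinearMap.trace_comp_comm']
  have : (U.orthogonalProjection).toLinearMap ∘ₗ U.subtype = LinearMap.id := by
    ext u
    simp [Submodule.orthogonalProjectionOnto_mem_subspace_eq_self]
  rw [this, LinearMap.trace_id]

/-- Let `G` be a finite group, `V` a finite-dimensional complex inner product
space with a unitary representation `ρ`, `H ≤ G`, and `Y ⊆ V` an `H`-invariant subspace
which is `H`-irreducible.  Assume `V` is induced from `Y`: the translates `ρ(g)Y` depend only
on the coset `gH`, translates for distinct cosets are orthogonal, and together they span `V`.
Let `E` be the orthogonal projection onto `Y` and let `W ⊆ V` be a nonzero `G`-invariant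
subspace.  Then there is a unit vector `ψ ∈ W` with `⟪ψ, Eψ⟫ = dim W / dim V`. -/
theorem stmt2 {G : Type} [Group G] [Fintype G]
    {V : Type} [NormedAddCommGroup V] [InnerProductSpace ℂ V] [FiniteDimensional ℂ V]
    (ρ : Representation ℂ G V)
    (hunitary : ∀ (g : G) (v w : V), ⟪ρ g v, ρ g w⟫ = ⟪v, w⟫)
    (H : Subgroup G)
    (Y : Submodule ℂ V)
    (hYinv : ∀ h ∈ H, ∀ y ∈ Y, ρ h y ∈ Y)
    (hYne : Y ≠ ⊥)
    (hYirr : ∀ q : Submodule ℂ V, q ≤ Y → (∀ h ∈ H, ∀ y ∈ q, ρ h y ∈ q) → q = ⊥ ∨ q = Y)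
    (hcoset : ∀ g g' : G, g⁻¹ * g' ∈ H → Y.map (ρ g) = Y.map (ρ g'))
    (horth : ∀ g g' : G, g⁻¹ * g' ∉ H →
      ∀ v ∈ Y.map (ρ g), ∀ w ∈ Y.map (ρ g'), ⟪v, w⟫ = 0)
    (hspan : (⨆ g : G, Y.map (ρ g)) = ⊤)
    (W : Submodule ℂ V)
    (hWinv : ∀ (g : G), ∀ w ∈ W, ρ g w ∈ W)
    (hWne : W ≠ ⊥) :
    ∃ ψ : V, ψ ∈ W ∧ ‖ψ‖ = 1 ∧
      ⟪ψ, (Y.orthogonalProjection ψ : V)⟫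
        = (Module.finrank ℂ W : ℂ) / (Module.finrank ℂ V : ℂ) := by
  classical
  set EL : V →ₗ[ℂ] V := Y.subtype ∘ₗ (Y.orthogonalProjection).toLinearMap with hELdef
  set PL : V →ₗ[ℂ] V := W.subtype ∘ₗ (W.orthogonalProjection).toLinearMap with hPLdef
  have hELapp : ∀ v : V, EL v = (Y.orthogonalProjection v : V) := fun v => rfl
  have hPLapp : ∀ v : V, PL v = (W.orthogonalProjection v : V) := fun v => rfl
  have hELmem : ∀ v : V, EL v ∈ Y := fun v => (Y.orthogonalProjection v).2
  have hPLmem : ∀ v : V, PL v ∈ W := fun v => (W.orthogonalProjection v).2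
  have hELself : ∀ v ∈ Y, EL v = v := fun v hv => Submodule.starProjection_eq_self_iff.2 hv
  have hPLself : ∀ v ∈ W, PL v = v := fun v hv => Submodule.starProjection_eq_self_iff.2 hv
  have hELzero : ∀ v : V, (∀ y ∈ Y, ⟪y, v⟫ = 0) → EL v = 0 := by
    intro v hv
    have : v ∈ Yᗮ := (Submodule.mem_orthogonal Y v).2 hv
    simp [hELapp, Submodule.orthogonalProjectionOnto_apply_of_mem_orthogonal this]
  have hginv : ∀ (g : G) (v : V), ρ g (ρ g⁻¹ v) = v := by
    intro g v
    rw [← Module.End.mul_apply, ← map_mul, mul_inv_cancel, map_one, Module.End.one_apply]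
  have hginv' : ∀ (g : G) (v : V), ρ g⁻¹ (ρ g v) = v := by
    intro g v
    rw [← Module.End.mul_apply, ← map_mul, inv_mul_cancel, map_one, Module.End.one_apply]
  -- commutation of projections with the group action
  have hPLcomm : ∀ (g : G) (v : V), PL (ρ g v) = ρ g (PL v) := by
    intro g v
    exact proj_comm' W (ρ g) (ρ g⁻¹) (hginv g) (hunitary g) (hWinv g) (hWinv g⁻¹) v
  have hELcomm : ∀ h ∈ H, ∀ v : V, EL (ρ h v) = ρ h (EL v) := by
    intro h hh v
    exact proj_comm' Y (ρ h) (ρ h⁻¹) (hginv h) (hunitary h) (hYinv h hh)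
      (hYinv h⁻¹ (inv_mem hh)) v
  -- translates of the projection
  set F : G → (V →ₗ[ℂ] V) := fun g => (ρ g) ∘ₗ EL ∘ₗ (ρ g⁻¹) with hFdef
  have hFfix : ∀ (g : G) (v : V), v ∈ Y.map (ρ g) → F g v = v := by
    intro g v hv
    obtain ⟨y, hy, rfl⟩ := hv
    simp only [hFdef, LinearMap.comp_apply]
    rw [hginv' g, hELself y hy]
  have hFzero : ∀ (g : G) (v : V), (∀ w ∈ Y.map (ρ g), ⟪w, v⟫ = 0) → F g v = 0 := by
    intro g v hv
    have h0 : EL (ρ g⁻¹ v) = 0 := by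
      apply hELzero
      intro y hy
      calc ⟪y, ρ g⁻¹ v⟫ = ⟪ρ g y, ρ g (ρ g⁻¹ v)⟫ := (hunitary g _ _).symm
        _ = ⟪ρ g y, v⟫ := by rw [hginv g]
        _ = 0 := hv _ (Submodule.mem_map_of_mem hy)
    simp only [hFdef, LinearMap.comp_apply, h0, map_zero]
  -- the sum identity  ∑ g, F g = |H| • id
  set Φ : V →ₗ[ℂ] V := ∑ g : G, F g with hΦdef
  have hcount : ∀ g₀ : G, (Finset.univ.filter fun g : G => g⁻¹ * g₀ ∈ H).card
      = Fintype.card H := by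
    intro g₀
    rw [← Finset.card_univ]
    apply Finset.card_bij' (fun g hg => (⟨g⁻¹ * g₀, (Finset.mem_filter.1 hg).2⟩ : H))
      (fun h _ => g₀ * (h : G)⁻¹)
    · intro g hg; simp
    · intro h _; group
    · intro g hg; group
    · intro h _; simp
  have hΦ : ∀ v : V, Φ v = (Fintype.card H : ℂ) • v := by
    have htop : ∀ v : V, v ∈ (⨆ g : G, Y.map (ρ g)) := by
      intro v; rw [hspan]; trivial
    intro v
    refine Submodule.iSup_induction (motive := fun v => Φ v = (Fintype.card H : ℂ) • v) _ (htop v)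
      (fun g₀ v hv => ?_) (by simp) (fun x y hx hy => by simp [map_add, hx, hy, smul_add])
    · show Φ v = (Fintype.card H : ℂ) • v
      have : Φ v = ∑ g : G, F g v := by simp [hΦdef, LinearMap.sum_apply]
      rw [this]
      rw [← Finset.sum_filter_add_sum_filter_not Finset.univ (fun g : G => g⁻¹ * g₀ ∈ H)]
      have h1 : ∑ g ∈ Finset.univ.filter (fun g : G => g⁻¹ * g₀ ∈ H), F g v
          = (Fintype.card H : ℂ) • v := by
        rw [Finset.sum_congr rfl (fun g hg => hFfix g v ?_)]
        · rw [Finset.sum_const, hcount g₀, Nat.cast_smul_eq_nsmul]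
        · rw [hcoset g g₀ (Finset.mem_filter.1 hg).2]; exact hv
      have h2 : ∑ g ∈ Finset.univ.filter (fun g : G => ¬ g⁻¹ * g₀ ∈ H), F g v = 0 := by
        apply Finset.sum_eq_zero
        intro g hg
        exact hFzero g v (fun w hw => horth g g₀ (Finset.mem_filter.1 hg).2 w hw v hv)
      rw [h1, h2, add_zero]
  -- Schur's lemma: EL ∘ PL ∘ EL = μ • EL on Y
  haveI : Nontrivial Y := Submodule.nontrivial_iff_ne_bot.2 hYne
  set S : Module.End ℂ Y := (Y.orthogonalProjection).toLinearMap ∘ₗ PL ∘ₗ Y.subtype with hSdef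
  obtain ⟨μ, hμ⟩ := Module.End.exists_eigenvalue S
  obtain ⟨y₀, hy₀⟩ := hμ.exists_hasEigenvector
  set A : V →ₗ[ℂ] V := EL ∘ₗ PL ∘ₗ EL with hAdef
  have hAy : ∀ y ∈ Y, A y = EL (PL y) := by
    intro y hy
    simp only [hAdef, LinearMap.comp_apply, hELself y hy]
  have hAy₀ : A (y₀ : V) = μ • (y₀ : V) := by
    rw [hAy _ y₀.2]
    have : S y₀ = μ • y₀ := Module.End.mem_eigenspace_iff.1 hy₀.1
    have h2 : (Y.orthogonalProjection (PL (y₀ : V)) : V) = ((μ • y₀ : Y) : V) := by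
      rw [← this]; rfl
    rw [hELapp, h2]
    simp
  -- the eigenspace within Y is H-invariant, hence all of Y
  have hSchur : ∀ y ∈ Y, A y = μ • y := by
    set q : Submodule ℂ V := Y ⊓ LinearMap.ker (A - μ • LinearMap.id) with hqdef
    have hqinv : ∀ h ∈ H, ∀ y ∈ q, ρ h y ∈ q := by
      intro h hh y hy
      obtain ⟨hyY, hyk⟩ := Submodule.mem_inf.1 hy
      refine Submodule.mem_inf.2 ⟨hYinv h hh y hyY, ?_⟩
      have hcommA : A (ρ h y) = ρ h (A y) := by
        simp only [hAdef, LinearMap.comp_apply, hELcomm h hh, hPLcomm h]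
      rw [LinearMap.mem_ker, LinearMap.sub_apply, LinearMap.smul_apply, LinearMap.id_apply] at hyk ⊢
      have : A y = μ • y := by linear_combination (norm := module) hyk
      rw [hcommA, this, map_smul, sub_self]
    have hq : q = Y := by
      rcases hYirr q inf_le_left hqinv with hbot | hY
      · exfalso
        have hmem : (y₀ : V) ∈ q := by
          refine Submodule.mem_inf.2 ⟨y₀.2, ?_⟩
          rw [LinearMap.mem_ker, LinearMap.sub_apply, LinearMap.smul_apply, LinearMap.id_apply,
            hAy₀, sub_self]
        rw [hbot, Submodule.mem_bot] at hmem
        exact hy₀.2 (Submodule.coe_eq_zero.1 hmem)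
      · exact hY
    intro y hy
    rw [← hq] at hy
    have := (Submodule.mem_inf.1 hy).2
    rw [LinearMap.mem_ker, LinearMap.sub_apply, LinearMap.smul_apply, LinearMap.id_apply] at this
    linear_combination (norm := module) this
  have hAE : ∀ v : V, EL (PL (EL v)) = μ • EL v := by
    intro v
    have := hSchur (EL v) (hELmem v)
    rwa [hAy _ (hELmem v)] at this
  -- trace computations
  set τ := LinearMap.trace ℂ V with hτdef
  have hEE : EL ∘ₗ EL = EL := by
    ext v; simp only [LinearMap.comp_apply]; exact hELself _ (hELmem v)
  have hPP : PL ∘ₗ PL = PL := by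
    ext v; simp only [LinearMap.comp_apply]; exact hPLself _ (hPLmem v)
  have htrE : τ EL = (Module.finrank ℂ Y : ℂ) := trace_proj Y
  have htrP : τ PL = (Module.finrank ℂ W : ℂ) := trace_proj W
  have htrPE : τ (PL ∘ₗ EL) = μ * (Module.finrank ℂ Y : ℂ) := by
    have h1 : PL ∘ₗ EL = PL ∘ₗ (EL ∘ₗ EL) := by rw [hEE]
    have h2 : τ ((PL ∘ₗ EL) ∘ₗ EL) = τ (EL ∘ₗ (PL ∘ₗ EL)) := by
      rw [LinearMap.trace_comp_comm']
    have h3 : EL ∘ₗ (PL ∘ₗ EL) = μ • EL := by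
      ext v; simp only [LinearMap.comp_apply, LinearMap.smul_apply]; exact hAE v
    rw [h1, ← LinearMap.comp_assoc, h2, h3, map_smul, htrE, smul_eq_mul]
  -- conjugation invariance of trace
  have hconj : ∀ (g : G) (B : V →ₗ[ℂ] V), τ ((ρ g) ∘ₗ B ∘ₗ (ρ g⁻¹)) = τ B := by
    intro g B
    rw [LinearMap.trace_comp_comm']
    have : (B ∘ₗ (ρ g⁻¹)) ∘ₗ (ρ g) = B := by
      ext v; simp only [LinearMap.comp_apply]; rw [hginv' g]
    rw [this]
  have hPLcommL : ∀ g : G, PL ∘ₗ (ρ g : V →ₗ[ℂ] V) = (ρ g : V →ₗ[ℂ] V) ∘ₗ PL := by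
    intro g; ext v; simp only [LinearMap.comp_apply]; exact hPLcomm g v
  have htrF : ∀ g : G, τ (PL ∘ₗ F g) = τ (PL ∘ₗ EL) := by
    intro g
    have : PL ∘ₗ F g = (ρ g) ∘ₗ ((PL ∘ₗ EL) ∘ₗ (ρ g⁻¹)) := by
      simp only [hFdef]
      rw [← LinearMap.comp_assoc, hPLcommL g]
      simp [LinearMap.comp_assoc]
    rw [this, hconj g]
  have htrFE : ∀ g : G, τ (F g) = (Module.finrank ℂ Y : ℂ) := by
    intro g
    simp only [hFdef]
    rw [hconj g, htrE]
  -- two trace identities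
  have hΦL : Φ = (Fintype.card H : ℂ) • LinearMap.id := by
    ext v; simp only [LinearMap.smul_apply, LinearMap.id_apply]; exact hΦ v
  have hid1 : (Fintype.card H : ℂ) * (Module.finrank ℂ V : ℂ)
      = (Fintype.card G : ℂ) * (Module.finrank ℂ Y : ℂ) := by
    have h1 : τ Φ = (Fintype.card H : ℂ) * (Module.finrank ℂ V : ℂ) := by
      rw [hΦL, map_smul, LinearMap.trace_id, smul_eq_mul]
    have h2 : τ Φ = (Fintype.card G : ℂ) * (Module.finrank ℂ Y : ℂ) := by
      rw [hΦdef, map_sum]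
      rw [Finset.sum_congr rfl (fun g _ => htrFE g), Finset.sum_const, Finset.card_univ,
        nsmul_eq_mul]
    rw [← h1, h2]
  have hid2 : (Fintype.card H : ℂ) * (Module.finrank ℂ W : ℂ)
      = (Fintype.card G : ℂ) * (μ * (Module.finrank ℂ Y : ℂ)) := by
    have hsum : PL ∘ₗ Φ = ∑ g : G, PL ∘ₗ F g := by
      ext v
      simp [hΦdef, LinearMap.sum_apply, LinearMap.comp_apply, map_sum]
    have h1 : τ (PL ∘ₗ Φ) = (Fintype.card H : ℂ) * (Module.finrank ℂ W : ℂ) := by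
      have : PL ∘ₗ Φ = (Fintype.card H : ℂ) • PL := by
        rw [hΦL]; ext v; simp
      rw [this, map_smul, htrP, smul_eq_mul]
    have h2 : τ (PL ∘ₗ Φ) = (Fintype.card G : ℂ) * (μ * (Module.finrank ℂ Y : ℂ)) := by
      rw [hsum, map_sum]
      rw [Finset.sum_congr rfl (fun g _ => by rw [htrF g, htrPE]), Finset.sum_const,
        Finset.card_univ, nsmul_eq_mul]
    rw [← h1, h2]
  -- nonvanishing of the relevant dimensions
  have hYpos : (Module.finrank ℂ Y : ℂ) ≠ 0 := by
    have : 0 < Module.finrank ℂ Y := Module.finrank_pos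
    exact_mod_cast this.ne'
  have hHpos : (Fintype.card H : ℂ) ≠ 0 := by
    have : 0 < Fintype.card H := Fintype.card_pos
    exact_mod_cast this.ne'
  have hVpos : (Module.finrank ℂ V : ℂ) ≠ 0 := by
    haveI : Nontrivial V := by
      rcases Submodule.nonzero_mem_of_bot_lt (bot_lt_iff_ne_bot.2 hYne) with ⟨⟨y, _⟩, hy⟩
      exact nontrivial_of_ne y 0 (by simpa using hy)
    have : 0 < Module.finrank ℂ V := Module.finrank_pos
    exact_mod_cast this.ne'
  have hWpos : (Module.finrank ℂ W : ℂ) ≠ 0 := by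
    haveI : Nontrivial W := Submodule.nontrivial_iff_ne_bot.2 hWne
    have : 0 < Module.finrank ℂ W := Module.finrank_pos
    exact_mod_cast this.ne'
  -- identify μ
  have hμval : μ = (Module.finrank ℂ W : ℂ) / (Module.finrank ℂ V : ℂ) := by
    have key : (Fintype.card H : ℂ) * (Module.finrank ℂ W : ℂ)
        = μ * ((Fintype.card H : ℂ) * (Module.finrank ℂ V : ℂ)) := by
      rw [hid2, hid1]; ring
    have key2 : (Module.finrank ℂ W : ℂ) = μ * (Module.finrank ℂ V : ℂ) := by
      apply mul_left_cancel₀ hHpos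
      rw [key]; ring
    rw [eq_div_iff hVpos]
    exact key2.symm
  have hμne : μ ≠ 0 := by
    rw [hμval]
    exact div_ne_zero hWpos hVpos
  -- find the eigenvector inside W
  have hBne : ∃ v : V, PL (EL (PL v)) ≠ 0 := by
    by_contra hcon
    push_neg at hcon
    have hB : PL ∘ₗ (EL ∘ₗ PL) = 0 := by
      ext v; simpa using hcon v
    have e1 : τ (PL ∘ₗ (EL ∘ₗ PL)) = τ (PL ∘ₗ EL) := by
      have a1 : τ (PL ∘ₗ (EL ∘ₗ PL)) = τ ((EL ∘ₗ PL) ∘ₗ PL) := LinearMap.trace_comp_comm' _ _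
      have a2 : (EL ∘ₗ PL) ∘ₗ PL = EL ∘ₗ PL := by rw [LinearMap.comp_assoc, hPP]
      have a3 : τ (EL ∘ₗ PL) = τ (PL ∘ₗ EL) := LinearMap.trace_comp_comm' _ _
      rw [a1, a2, a3]
    have h0 : τ (PL ∘ₗ (EL ∘ₗ PL)) = 0 := by rw [hB, map_zero]
    rw [e1, htrPE] at h0
    exact (mul_ne_zero hμne hYpos) h0
  obtain ⟨v, hv⟩ := hBne
  set u : V := EL (PL v) with hudef
  set w : V := PL u with hwdef
  have hwne : w ≠ 0 := hv
  have hwW : w ∈ W := hPLmem u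
  have hEw : PL (EL w) = μ • w := by
    have h1 : EL (PL u) = μ • u := by
      have := hAE (PL v)
      simpa [hudef] using this
    rw [hwdef, h1, map_smul]
  have hnw : ‖w‖ ≠ 0 := norm_ne_zero_iff.2 hwne
  refine ⟨((‖w‖ : ℂ))⁻¹ • w, Submodule.smul_mem W _ hwW, ?_, ?_⟩
  · rw [norm_smul]
    simp [norm_inv, hnw]
  · have hψE : ∀ ψ : V, ψ ∈ W → ⟪ψ, (Y.orthogonalProjection ψ : V)⟫ = ⟪ψ, PL (EL ψ)⟫ := by
      intro ψ hψ
      have h1 : (Y.orthogonalProjection ψ : V) = EL ψ := rfl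
      rw [h1, hPLapp]
      rw [show ⟪ψ, (W.orthogonalProjection (EL ψ) : V)⟫ = ⟪(W.orthogonalProjection ψ : V), EL ψ⟫ from (Submodule.inner_starProjection_left_eq_right W ψ (EL ψ)).symm]
      rw [← hPLapp, hPLself ψ hψ]
    set c : ℂ := ((‖w‖ : ℂ))⁻¹ with hcdef
    have hcW : c • w ∈ W := Submodule.smul_mem W _ hwW
    rw [hψE _ hcW]
    have h2 : PL (EL (c • w)) = c • (μ • w) := by
      rw [map_smul, map_smul, hEw]
    rw [h2]
    rw [inner_smul_left, inner_smul_right, inner_smul_right]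
    have hc : (starRingEnd ℂ) c = c := by
      simp [hcdef, ← Complex.ofReal_inv]
    rw [hc]
    have hww := inner_self_eq_norm_sq_to_K (𝕜 := ℂ) w
    rw [hww, ← hμval, hcdef]
    have hch : ((‖w‖ : ℝ) : ℂ) ≠ 0 := by exact_mod_cast hnw
    field_simp
    ring_nf
    rfl
end

section
/- Let G be a finite group, V a finite-dimensional complex inner product space carrying a unitary representation ρ of G, H ≤ G a subgroup, and Y ⊆ V an H-invariant subspace that is irreducible as a representation of H. Assume V is induced from Y, i.e., for g, g' ∈ G the subspaces ρ(g)Y and ρ(g')Y are equal if gH = g'H, are pairwise orthogonal if gH ≠ g'H, and together span V. Let E denote orthogonal projection onto Y, and let W ⊆ V be a G-invariant subspace. Then for every unit vector ψ ∈ W, ⟨ψ, Eψ⟩ ≤ dim W / dim V. -/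
open scoped ComplexInnerProductSpace ComplexOrder

-- auxiliary: projection facts
section aux
variable {V : Type} [NormedAddCommGroup V] [InnerProductSpace ℂ V] [FiniteDimensional ℂ V]
  (U : Submodule ℂ V)

noncomputable def projL : Module.End ℂ V :=
  U.subtype ∘ₗ (U.orthogonalProjectionOnto).toLinearMap

lemma projL_apply (v : V) : projL U v = (U.orthogonalProjectionOnto v : V) := rfl

lemma projL_mem (v : V) : projL U v ∈ U := (U.orthogonalProjectionOnto v).2

lemma projL_fix {v : V} (hv : v ∈ U) : projL U v = v :=
  Submodule.starProjection_eq_self_iff.mpr hv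

lemma projL_zero {v : V} (hv : v ∈ Uᗮ) : projL U v = 0 := by
  rw [projL_apply, Submodule.orthogonalProjectionOnto_apply_of_mem_orthogonal hv,
    Submodule.coe_zero]

lemma projL_sa (u v : V) : ⟪projL U u, v⟫ = ⟪u, projL U v⟫ :=
  Submodule.inner_starProjection_left_eq_right U u v

lemma projL_idem (v : V) : projL U (projL U v) = projL U v := projL_fix U (projL_mem U v)

lemma projL_isProj : LinearMap.IsProj U (projL U) := ⟨projL_mem U, fun _ h => projL_fix U h⟩

lemma projL_comm {G : Type} [Group G] (ρ : Representation ℂ G V)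
    (hunitary : ∀ (g : G) (v w : V), ⟪ρ g v, ρ g w⟫ = ⟪v, w⟫) (g : G)
    (h1 : ∀ u ∈ U, ρ g u ∈ U) (h2 : ∀ u ∈ U, ρ g⁻¹ u ∈ U) (v : V) :
    projL U (ρ g v) = ρ g (projL U v) := by
  have hsplit : ρ g v = ρ g (projL U v) + ρ g (v - projL U v) := by
    rw [← map_add]; congr 1; abel
  have hmem1 : ρ g (projL U v) ∈ U := h1 _ (projL_mem U v)
  have hmem2 : ρ g (v - projL U v) ∈ Uᗮ := by
    rw [Submodule.mem_orthogonal]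
    intro u hu
    have hgu : ρ g (ρ g⁻¹ u) = u := by
      rw [← Module.End.mul_apply, ← map_mul, mul_inv_cancel, map_one, Module.End.one_apply]
    calc ⟪u, ρ g (v - projL U v)⟫ = ⟪ρ g (ρ g⁻¹ u), ρ g (v - projL U v)⟫ := by rw [hgu]
      _ = ⟪ρ g⁻¹ u, v - projL U v⟫ := hunitary g _ _
      _ = 0 := (Submodule.mem_orthogonal _ _).mp
            (Submodule.sub_starProjection_mem_orthogonal (K := U) v) _ (h2 u hu)
  rw [hsplit, map_add, projL_fix U hmem1, projL_zero U hmem2, add_zero]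

end aux

set_option maxHeartbeats 1600000 in
/-- Let `G` be a finite group, `V` a finite-dimensional complex inner product
space with a unitary representation `ρ`, `H ≤ G`, and `Y ⊆ V` an `H`-invariant subspace
which is `H`-irreducible.  Assume `V` is induced from `Y`: the translates `ρ(g)Y` depend only
on the coset `gH`, translates for distinct cosets are orthogonal, and together they span `V`.
Let `E` be the orthogonal projection onto `Y` and let `W ⊆ V` be a `G`-invariant subspace.
Then every unit vector `ψ ∈ W` satisfies `⟪ψ, Eψ⟫ ≤ dim W / dim V`. -/
theorem stmt3 {G : Type} [Group G] [Fintype G]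
    {V : Type} [NormedAddCommGroup V] [InnerProductSpace ℂ V] [FiniteDimensional ℂ V]
    (ρ : Representation ℂ G V)
    (hunitary : ∀ (g : G) (v w : V), ⟪ρ g v, ρ g w⟫ = ⟪v, w⟫)
    (H : Subgroup G)
    (Y : Submodule ℂ V)
    (hYinv : ∀ h ∈ H, ∀ y ∈ Y, ρ h y ∈ Y)
    (hYne : Y ≠ ⊥)
    (hYirr : ∀ q : Submodule ℂ V, q ≤ Y → (∀ h ∈ H, ∀ y ∈ q, ρ h y ∈ q) → q = ⊥ ∨ q = Y)
    (hcoset : ∀ g g' : G, g⁻¹ * g' ∈ H → Y.map (ρ g) = Y.map (ρ g'))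
    (horth : ∀ g g' : G, g⁻¹ * g' ∉ H →
      ∀ v ∈ Y.map (ρ g), ∀ w ∈ Y.map (ρ g'), ⟪v, w⟫ = 0)
    (hspan : (⨆ g : G, Y.map (ρ g)) = ⊤)
    (W : Submodule ℂ V)
    (hWinv : ∀ (g : G), ∀ w ∈ W, ρ g w ∈ W) :
    ∀ ψ : V, ψ ∈ W → ‖ψ‖ = 1 →
      ⟪ψ, (Y.orthogonalProjection ψ : V)⟫
        ≤ ((Module.finrank ℂ W : ℂ) / (Module.finrank ℂ V : ℂ)) := by
  classical
  set E : Module.End ℂ V := projL Y with hEdef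
  set P : Module.End ℂ V := projL W with hPdef
  -- commutation
  have hPcomm : ∀ (g : G) (v : V), P (ρ g v) = ρ g (P v) := fun g v =>
    projL_comm W ρ hunitary g (hWinv g) (hWinv g⁻¹) v
  have hEcomm : ∀ h ∈ H, ∀ v : V, E (ρ h v) = ρ h (E v) := fun h hh v =>
    projL_comm Y ρ hunitary h (hYinv h hh) (hYinv h⁻¹ (inv_mem hh)) v
  -- Schur: E * P * E = μ • E
  set T : Module.End ℂ V := E * P * E with hTdef
  have hTapp : ∀ v : V, T v = E (P (E v)) := fun v => rfl
  have hTmem : ∀ x ∈ Y, T x ∈ Y := fun x _ => projL_mem Y _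
  have hTcomm : ∀ h ∈ H, ∀ v : V, T (ρ h v) = ρ h (T v) := by
    intro h hh v
    rw [hTapp, hTapp, hEcomm h hh, hPcomm, hEcomm h hh]
  haveI : Nontrivial Y := Submodule.nontrivial_iff_ne_bot.mpr hYne
  obtain ⟨μ, hμ⟩ := Module.End.exists_eigenvalue (T.restrict hTmem)
  obtain ⟨⟨y₀, hy₀Y⟩, hy₀eig, hy₀ne⟩ := hμ.exists_hasEigenvector
  set q : Submodule ℂ V := (Module.End.eigenspace (T.restrict hTmem) μ).map Y.subtype with hqdef
  have hqmem : ∀ x : V, x ∈ q ↔ x ∈ Y ∧ T x = μ • x := by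
    intro x
    constructor
    · rintro ⟨⟨z, hz⟩, hmem, rfl⟩
      refine ⟨hz, ?_⟩
      have := Module.End.mem_eigenspace_iff.mp hmem
      exact congrArg Subtype.val this
    · rintro ⟨hxY, hTx⟩
      exact ⟨⟨x, hxY⟩, Module.End.mem_eigenspace_iff.mpr (Subtype.ext hTx), rfl⟩
  have hqinv : ∀ h ∈ H, ∀ x ∈ q, ρ h x ∈ q := by
    intro h hh x hx
    obtain ⟨hxY, hTx⟩ := (hqmem x).mp hx
    refine (hqmem _).mpr ⟨hYinv h hh x hxY, ?_⟩
    rw [hTcomm h hh, hTx, map_smul]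
  have hqne : q ≠ ⊥ := by
    intro hbot
    have hmem : y₀ ∈ q := (hqmem y₀).mpr ⟨hy₀Y, by
      have := Module.End.mem_eigenspace_iff.mp hy₀eig
      exact congrArg Subtype.val this⟩
    rw [hbot] at hmem
    exact hy₀ne (Subtype.ext (by simpa using hmem))
  have hqY : q = Y := (hYirr q (fun x hx => ((hqmem x).mp hx).1) hqinv).resolve_left hqne
  have hEPE : T = μ • E := by
    ext v
    have hEvq : E v ∈ q := hqY ▸ projL_mem Y v
    have := ((hqmem _).mp hEvq).2
    have hTT : T (E v) = T v := by
      rw [hTapp, hTapp, projL_idem]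
    rw [LinearMap.smul_apply, ← hTT, this]
  -- the summed conjugated projections
  set F : Module.End ℂ V := ∑ g : G, ρ g * E * ρ g⁻¹ with hFdef
  have hterm : ∀ (g g₀ : G), ∀ y ∈ Y,
      (ρ g * E * ρ g⁻¹) (ρ g₀ y) = if g⁻¹ * g₀ ∈ H then ρ g₀ y else 0 := by
    intro g g₀ y hy
    have hmul : ρ g⁻¹ (ρ g₀ y) = ρ (g⁻¹ * g₀) y := by
      rw [map_mul, Module.End.mul_apply]
    have happ : (ρ g * E * ρ g⁻¹) (ρ g₀ y) = ρ g (E (ρ (g⁻¹ * g₀) y)) := by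
      rw [Module.End.mul_apply, Module.End.mul_apply, hmul]
    by_cases hcase : g⁻¹ * g₀ ∈ H
    · rw [if_pos hcase, happ, projL_fix Y (hYinv _ hcase y hy), ← Module.End.mul_apply,
        ← map_mul, mul_inv_cancel_left]
    · rw [if_neg hcase, happ, projL_zero Y ?_, map_zero]
      rw [Submodule.mem_orthogonal]
      intro u hu
      refine horth 1 (g⁻¹ * g₀) (by simpa using hcase) u ?_ _ ⟨y, hy, rfl⟩
      rw [map_one]
      simpa using hu
  have hFid : F = (Fintype.card H : ℂ) • 1 := by
    have key : ∀ g₀ : G, Y.map (ρ g₀) ≤ LinearMap.ker (F - (Fintype.card H : ℂ) • 1) := by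
      rintro g₀ x ⟨y, hy, rfl⟩
      rw [LinearMap.mem_ker, LinearMap.sub_apply, LinearMap.smul_apply, Module.End.one_apply,
        hFdef, LinearMap.sum_apply, Finset.sum_congr rfl (fun g _ => hterm g g₀ y hy),
        ← Finset.sum_filter, Finset.sum_const, sub_eq_zero]
      have hcard : (Finset.univ.filter (fun g : G => g⁻¹ * g₀ ∈ H)).card = Fintype.card H := by
        rw [← Fintype.card_subtype]
        refine Fintype.card_congr
          { toFun := fun g => ⟨g.1⁻¹ * g₀, g.2⟩
            invFun := fun h => ⟨g₀ * (h : G)⁻¹, by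
              have : (g₀ * (h : G)⁻¹)⁻¹ * g₀ = (h : G) := by group
              rw [this]; exact h.2⟩
            left_inv := fun g => by
              ext; simp only []; group
            right_inv := fun h => by
              ext; simp only []; group }
      rw [hcard, Nat.cast_smul_eq_nsmul]
    have htop : (⊤ : Submodule ℂ V) ≤ LinearMap.ker (F - (Fintype.card H : ℂ) • 1) := by
      rw [← hspan]; exact iSup_le key
    have : F - (Fintype.card H : ℂ) • 1 = 0 := by
      ext v
      simpa using (LinearMap.mem_ker.mp (htop (Submodule.mem_top (x := v))))
    linear_combination (norm := module) this
  -- trace identities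
  have hEidem : E * E = E := LinearMap.ext fun v => projL_idem Y v
  have hPρ : ∀ g : G, P * ρ g = ρ g * P := fun g => LinearMap.ext fun v => hPcomm g v
  have htrE : LinearMap.trace ℂ V E = (Module.finrank ℂ Y : ℂ) := (projL_isProj Y).trace
  have htrP : LinearMap.trace ℂ V P = (Module.finrank ℂ W : ℂ) := (projL_isProj W).trace
  have htrconj : ∀ (g : G) (A : Module.End ℂ V),
      LinearMap.trace ℂ V (ρ g * A * ρ g⁻¹) = LinearMap.trace ℂ V A := by
    intro g A
    rw [LinearMap.trace_mul_comm, ← mul_assoc, ← map_mul, inv_mul_cancel, map_one, one_mul]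
  have heq1 : (Fintype.card G : ℂ) * (Module.finrank ℂ Y : ℂ)
      = (Fintype.card H : ℂ) * (Module.finrank ℂ V : ℂ) := by
    have h1 : LinearMap.trace ℂ V F = (Fintype.card G : ℂ) * (Module.finrank ℂ Y : ℂ) := by
      rw [hFdef, map_sum, Finset.sum_congr rfl (fun g _ => by rw [htrconj g E, htrE]),
        Finset.sum_const, Finset.card_univ, nsmul_eq_mul]
    have h2 : LinearMap.trace ℂ V F = (Fintype.card H : ℂ) * (Module.finrank ℂ V : ℂ) := by
      rw [hFid, map_smul, LinearMap.trace_one, smul_eq_mul]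
    rw [← h1, h2]
  have heq2 : (Fintype.card G : ℂ) * LinearMap.trace ℂ V (P * E)
      = (Fintype.card H : ℂ) * (Module.finrank ℂ W : ℂ) := by
    have h1 : LinearMap.trace ℂ V (P * F)
        = (Fintype.card G : ℂ) * LinearMap.trace ℂ V (P * E) := by
      have hconj : ∀ g : G, P * (ρ g * E * ρ g⁻¹) = ρ g * (P * E) * ρ g⁻¹ := by
        intro g
        calc P * (ρ g * E * ρ g⁻¹) = (P * ρ g) * E * ρ g⁻¹ := by noncomm_ring
          _ = (ρ g * P) * E * ρ g⁻¹ := by rw [hPρ]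
          _ = ρ g * (P * E) * ρ g⁻¹ := by noncomm_ring
      rw [hFdef, Finset.mul_sum, map_sum,
        Finset.sum_congr rfl (fun g _ => by rw [hconj g, htrconj g (P * E)]),
        Finset.sum_const, Finset.card_univ, nsmul_eq_mul]
    have h2 : LinearMap.trace ℂ V (P * F)
        = (Fintype.card H : ℂ) * (Module.finrank ℂ W : ℂ) := by
      rw [hFid, mul_smul_comm, mul_one, map_smul, htrP, smul_eq_mul]
    rw [← h1, h2]
  have heq3 : LinearMap.trace ℂ V (P * E) = μ * (Module.finrank ℂ Y : ℂ) := by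
    have h1 : LinearMap.trace ℂ V T = μ * (Module.finrank ℂ Y : ℂ) := by
      rw [hEPE, map_smul, htrE, smul_eq_mul]
    have h2 : LinearMap.trace ℂ V T = LinearMap.trace ℂ V (P * E) := by
      rw [hTdef, LinearMap.trace_mul_comm, ← mul_assoc, hEidem, LinearMap.trace_mul_comm]
    rw [← h2, h1]
  -- deduce μ = finrank W / finrank V
  haveI : Nontrivial V := by
    refine ⟨y₀, 0, fun h => hy₀ne (Subtype.ext ?_)⟩
    simpa using h
  have hVne : (Module.finrank ℂ V : ℂ) ≠ 0 :=
    Nat.cast_ne_zero.mpr (Module.finrank_pos (R := ℂ) (M := V)).ne'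
  have hHne : (Fintype.card H : ℂ) ≠ 0 := Nat.cast_ne_zero.mpr Fintype.card_ne_zero
  have hμval : μ = (Module.finrank ℂ W : ℂ) / (Module.finrank ℂ V : ℂ) := by
    have h1 : (Fintype.card G : ℂ) * (μ * (Module.finrank ℂ Y : ℂ))
        = (Fintype.card H : ℂ) * (Module.finrank ℂ W : ℂ) := by rw [← heq3]; exact heq2
    have h2 : (Fintype.card H : ℂ) * (μ * (Module.finrank ℂ V : ℂ))
        = (Fintype.card H : ℂ) * (Module.finrank ℂ W : ℂ) := by
      linear_combination h1 - μ * heq1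
    have h3 := mul_left_cancel₀ hHne h2
    rw [eq_div_iff hVne]
    exact h3
  -- the final inequality
  intro ψ hψW _hψnorm
  have hPψ : P ψ = ψ := projL_fix W hψW
  show ⟪ψ, E ψ⟫ ≤ _
  set r : ℝ := ‖E ψ‖ with hrdef
  set s : ℝ := ‖P (E ψ)‖ with hsdef
  have h1 : ⟪ψ, E ψ⟫ = ((r : ℂ)) ^ 2 := by
    calc ⟪ψ, E ψ⟫ = ⟪ψ, E (E ψ)⟫ := by rw [projL_idem]
      _ = ⟪E ψ, E ψ⟫ := (projL_sa Y ψ (E ψ)).symm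
      _ = ((r : ℂ)) ^ 2 := inner_self_eq_norm_sq_to_K (E ψ)
  have h2 : ((s : ℂ)) ^ 2 = μ * ((r : ℂ)) ^ 2 := by
    calc ((s : ℂ)) ^ 2 = ⟪P (E ψ), P (E ψ)⟫ := by rw [hsdef]; exact (inner_self_eq_norm_sq_to_K (P (E ψ))).symm
      _ = ⟪E ψ, P (P (E ψ))⟫ := projL_sa W _ _
      _ = ⟪E ψ, P (E ψ)⟫ := by rw [projL_idem]
      _ = ⟪ψ, E (P (E ψ))⟫ := projL_sa Y _ _
      _ = ⟪ψ, T ψ⟫ := by rw [hTapp]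
      _ = μ * ⟪ψ, E ψ⟫ := by rw [hEPE, LinearMap.smul_apply, inner_smul_right]
      _ = μ * ((r : ℂ)) ^ 2 := by rw [h1]
  have h3 : r ^ 2 ≤ s := by
    have ha : ⟪ψ, E ψ⟫ = ⟪ψ, P (E ψ)⟫ := by
      rw [← projL_sa W ψ (E ψ), hPψ]
    have hb : ‖⟪ψ, P (E ψ)⟫‖ ≤ ‖ψ‖ * s := by
      rw [hsdef]; exact norm_inner_le_norm ψ (P (E ψ))
    have hr0 : (0:ℝ) ≤ r := by rw [hrdef]; exact norm_nonneg _
    have hc : ‖⟪ψ, E ψ⟫‖ = r ^ 2 := by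
      rw [h1, norm_pow, Complex.norm_real, Real.norm_of_nonneg hr0]
    rw [ha] at hc
    rw [_hψnorm, one_mul, hc] at hb
    exact hb
  -- convert to real inequality
  have hm0 : (0:ℝ) ≤ (Module.finrank ℂ W : ℝ) / (Module.finrank ℂ V : ℝ) :=
    div_nonneg (Nat.cast_nonneg _) (Nat.cast_nonneg _)
  have hμre : μ = (((Module.finrank ℂ W : ℝ) / (Module.finrank ℂ V : ℝ) : ℝ) : ℂ) := by
    rw [hμval]; push_cast; ring
  have h2' : s ^ 2 = ((Module.finrank ℂ W : ℝ) / (Module.finrank ℂ V : ℝ)) * r ^ 2 := by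
    have := h2
    rw [hμre] at this
    exact_mod_cast this
  have hfin : r ^ 2 ≤ (Module.finrank ℂ W : ℝ) / (Module.finrank ℂ V : ℝ) := by
    rcases lt_or_eq_of_le (sq_nonneg r) with hpos | hzero
    · refine le_of_mul_le_mul_right ?_ hpos
      calc r ^ 2 * r ^ 2 ≤ s * s := by nlinarith [sq_nonneg r]
        _ = s ^ 2 := by ring
        _ = _ := by rw [h2']
    · rw [← hzero]; exact hm0
  rw [h1, hμval.symm, hμre]
  calc ((r : ℂ)) ^ 2 = ((r ^ 2 : ℝ) : ℂ) := by push_cast; ring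
    _ ≤ _ := Complex.real_le_real.mpr hfin
end

section
/- Let n ≥ 2 and let V = ℂⁿ carry the permutation representation of the symmetric group Sₙ (σ permutes the standard basis vectors e₁,…,eₙ). For any natural number t ≤ n − 2, if a vector v in the t-fold tensor power V^{⊗t} (with diagonal Sₙ-action) satisfies σ·v = sign(σ)·v for all σ ∈ Sₙ, then v = 0. Moreover, for t = n − 1 there exists a nonzero v ∈ V^{⊗(n−1)} with σ·v = sign(σ)·v for all σ ∈ Sₙ. -/
open scoped TensorProduct

/-- The `t`-fold tensor power `V^{⊗t}` of `V = ℂⁿ` (realized as `Fin n →₀ ℂ`, with basis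
vectors indexed by `{1, …, n}`). -/
noncomputable def TPow (n t : ℕ) : Type := ⨂[ℂ] _ : Fin t, (Fin n →₀ ℂ)

noncomputable instance (n t : ℕ) : AddCommGroup (TPow n t) :=
  inferInstanceAs (AddCommGroup (⨂[ℂ] _ : Fin t, (Fin n →₀ ℂ)))

noncomputable instance (n t : ℕ) : Module ℂ (TPow n t) :=
  inferInstanceAs (Module ℂ (⨂[ℂ] _ : Fin t, (Fin n →₀ ℂ)))

/-- The diagonal action of a permutation `σ` on `V^{⊗t}`, where `σ` acts on each tensor
factor of `V = ℂⁿ` by the permutation representation (permuting the basis vectors). -/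
noncomputable def diagPerm (n t : ℕ) (σ : Equiv.Perm (Fin n)) : TPow n t →ₗ[ℂ] TPow n t :=
  PiTensorProduct.map (fun _ => Finsupp.lmapDomain ℂ ℂ (fun i : Fin n => σ • i))

noncomputable def bfun (n t : ℕ) (g : Fin t → Fin n) : TPow n t :=
  PiTensorProduct.tprod ℂ (fun i => Finsupp.single (g i) 1)

noncomputable def Phi (n t : ℕ) : TPow n t →ₗ[ℂ] ((Fin t → Fin n) → ℂ) :=
  LinearMap.pi (fun f => PiTensorProduct.lift
    ((MultilinearMap.mkPiAlgebra ℂ (Fin t) ℂ).compLinearMap (fun i => Finsupp.lapply (f i))))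

lemma Phi_tprod (n t : ℕ) (v : Fin t → (Fin n →₀ ℂ)) (f : Fin t → Fin n) :
    Phi n t (PiTensorProduct.tprod ℂ v) f = ∏ i, v i (f i) := by
  have h : Phi n t (PiTensorProduct.tprod ℂ v) f =
      PiTensorProduct.lift ((MultilinearMap.mkPiAlgebra ℂ (Fin t) ℂ).compLinearMap
        (fun i => Finsupp.lapply (f i))) (PiTensorProduct.tprod ℂ v) := rfl
  rw [h, PiTensorProduct.lift.tprod]
  simp

lemma diagPerm_tprod (n t : ℕ) (σ : Equiv.Perm (Fin n)) (v : Fin t → (Fin n →₀ ℂ)) :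
    diagPerm n t σ (PiTensorProduct.tprod ℂ v) =
      PiTensorProduct.tprod ℂ
        (fun i => Finsupp.lmapDomain ℂ ℂ (fun i : Fin n => σ • i) (v i)) :=
  PiTensorProduct.map_tprod _ _

lemma Phi_bfun (n t : ℕ) (g f : Fin t → Fin n) :
    Phi n t (bfun n t g) f = if g = f then 1 else 0 := by
  rw [bfun, Phi_tprod]
  simp only [Finsupp.single_apply]
  rw [Fintype.prod_boole]
  simp [funext_iff]

lemma diagPerm_bfun (n t : ℕ) (σ : Equiv.Perm (Fin n)) (g : Fin t → Fin n) :
    diagPerm n t σ (bfun n t g) = bfun n t (σ ∘ g) := by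
  rw [bfun, diagPerm_tprod, bfun]
  simp [Finsupp.lmapDomain_apply, Finsupp.mapDomain_single, Equiv.Perm.smul_def, Function.comp]
  rfl

lemma Phi_diagPerm (n t : ℕ) (σ : Equiv.Perm (Fin n)) (v : TPow n t) (f : Fin t → Fin n) :
    Phi n t (diagPerm n t σ v) f = Phi n t v (⇑σ⁻¹ ∘ f) := by
  induction v using PiTensorProduct.induction_on with
  | smul_tprod r w =>
    erw [map_smul, map_smul, map_smul]; simp only [Pi.smul_apply, smul_eq_mul]
    rw [diagPerm_tprod, Phi_tprod, Phi_tprod]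
    congr 1
    refine Finset.prod_congr rfl fun i _ => ?_
    rw [Finsupp.lmapDomain_apply]
    have hfi : f i = σ • (σ⁻¹ (f i)) := by simp [Equiv.Perm.smul_def]
    conv_lhs => rw [hfi]
    exact Finsupp.mapDomain_apply (MulAction.injective σ) _ _
  | add x y hx hy =>
    erw [map_add, map_add, map_add]; simp only [Pi.add_apply, hx, hy]

lemma sum_coeff (n t : ℕ) (v : TPow n t) :
    ∑ f : Fin t → Fin n, Phi n t v f • bfun n t f = v := by
  induction v using PiTensorProduct.induction_on with
  | smul_tprod r w =>
    have hw : ∀ i, w i = ∑ j, w i j • Finsupp.single j (1 : ℂ) := by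
      intro i
      conv_lhs => rw [← Finsupp.univ_sum_single (w i)]
      exact Finset.sum_congr rfl fun j _ => by
        rw [Finsupp.smul_single, smul_eq_mul, mul_one]
    conv_rhs => rw [show (PiTensorProduct.tprod ℂ w) = PiTensorProduct.tprod ℂ
      (fun i => ∑ j, w i j • Finsupp.single j (1:ℂ)) by rw [← funext hw]]
    rw [MultilinearMap.map_sum]
    rw [Finset.smul_sum]
    refine Finset.sum_congr rfl fun f _ => ?_
    erw [map_smul, Pi.smul_apply, Phi_tprod, MultilinearMap.map_smul_univ]
    simp [bfun, smul_smul, mul_comm]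
    rfl
  | add x y hx hy =>
    erw [map_add]; simp only [Pi.add_apply, add_smul, Finset.sum_add_distrib]
    rw [hx, hy]
    rfl

/-- Let `n ≥ 2` and let `V = ℂⁿ` carry the permutation representation of `Sₙ`.
For any `t ≤ n - 2`, a vector `v ∈ V^{⊗t}` (diagonal action) with `σ · v = sign σ • v` for
all `σ ∈ Sₙ` must be zero; moreover for `t = n - 1` there is a nonzero such vector.
(The sign representation appears in `V^{⊗t}` iff `t ≥ n - 1`.) -/
theorem stmt6 (n : ℕ) (hn : 2 ≤ n) :
    (∀ t : ℕ, t ≤ n - 2 →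
      ∀ v : TPow n t,
        (∀ σ : Equiv.Perm (Fin n),
          diagPerm n t σ v = ((Equiv.Perm.sign σ : ℤ) : ℂ) • v) →
        v = 0) ∧
    (∃ v : TPow n (n - 1), v ≠ 0 ∧
      ∀ σ : Equiv.Perm (Fin n),
        diagPerm n (n - 1) σ v = ((Equiv.Perm.sign σ : ℤ) : ℂ) • v) := by
  constructor
  · intro t ht v hv
    have hcoeff : ∀ f : Fin t → Fin n, Phi n t v f = 0 := by
      intro f
      obtain ⟨a, ha, b, hb, hab⟩ :
          ∃ a ∈ (Finset.univ.image f)ᶜ, ∃ b ∈ (Finset.univ.image f)ᶜ, a ≠ b := by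
        apply Finset.one_lt_card.mp
        have h1 : (Finset.univ.image f).card ≤ t :=
          le_trans Finset.card_image_le (by simp)
        have h2 : ((Finset.univ.image f)ᶜ : Finset (Fin n)).card
            = n - (Finset.univ.image f).card := by
          rw [Finset.card_compl]; simp
        omega
      have hfa : ∀ i, f i ≠ a := by
        intro i h
        exact (Finset.mem_compl.mp ha) (Finset.mem_image.mpr ⟨i, Finset.mem_univ i, h⟩)
      have hfb : ∀ i, f i ≠ b := by
        intro i h
        exact (Finset.mem_compl.mp hb) (Finset.mem_image.mpr ⟨i, Finset.mem_univ i, h⟩)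
      have hfix : ⇑(Equiv.swap a b)⁻¹ ∘ f = f := by
        funext i
        simp [Equiv.swap_inv, Equiv.swap_apply_of_ne_of_ne (hfa i) (hfb i)]
      have key := congrArg (fun w => Phi n t w f) (hv (Equiv.swap a b))
      rw [Phi_diagPerm, hfix, map_smul, Pi.smul_apply, Equiv.Perm.sign_swap hab] at key
      have h2 : Phi n t v f = -Phi n t v f := by
        simpa using key
      linear_combination h2 / 2
    rw [← sum_coeff n t v]
    simp [hcoeff]
  · have hinj : ∀ π : Equiv.Perm (Fin n),
        ⇑π ∘ (Fin.castLE (Nat.sub_le n 1)) = Fin.castLE (Nat.sub_le n 1) → π = 1 := by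
      intro π hπ
      have key : ∀ i : Fin (n-1), π (Fin.castLE (Nat.sub_le n 1) i)
          = Fin.castLE (Nat.sub_le n 1) i := fun i => congrFun hπ i
      have keylt : ∀ x : Fin n, (x : ℕ) < n - 1 → π x = x := by
        intro x hx
        have hx2 : x = Fin.castLE (Nat.sub_le n 1) ⟨(x : ℕ), hx⟩ := Fin.ext rfl
        rw [hx2, key]
      ext x
      show ((π x : Fin n) : ℕ) = ((x : Fin n) : ℕ)
      by_cases hx : (x : ℕ) < n - 1
      · rw [keylt x hx]
      · have hx' : (x : ℕ) = n - 1 := by have := x.isLt; omega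
        by_cases hy : ((π x : Fin n) : ℕ) < n - 1
        · exfalso
          have h1 : π (π x) = π x := keylt (π x) hy
          have h2 : π x = x := π.injective h1
          rw [h2] at hy; omega
        · have := (π x).isLt; omega
    refine ⟨∑ π : Equiv.Perm (Fin n), ((Equiv.Perm.sign π : ℤ) : ℂ) •
        bfun n (n-1) (⇑π ∘ (Fin.castLE (Nat.sub_le n 1))), ?_, ?_⟩
    · intro h0
      have hval : Phi n (n-1) (∑ π : Equiv.Perm (Fin n), ((Equiv.Perm.sign π : ℤ) : ℂ) •
          bfun n (n-1) (⇑π ∘ (Fin.castLE (Nat.sub_le n 1)))) (Fin.castLE (Nat.sub_le n 1))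
          = 1 := by
        rw [map_sum]
        rw [Finset.sum_apply]
        have : ∀ π : Equiv.Perm (Fin n),
            (Phi n (n-1) (((Equiv.Perm.sign π : ℤ) : ℂ) •
              bfun n (n-1) (⇑π ∘ (Fin.castLE (Nat.sub_le n 1))))) (Fin.castLE (Nat.sub_le n 1))
            = if π = 1 then ((Equiv.Perm.sign π : ℤ) : ℂ) else 0 := by
          intro π
          rw [map_smul, Pi.smul_apply, Phi_bfun]
          by_cases h : π = 1
          · subst h; simp
          · rw [if_neg h, if_neg (fun hc => h (hinj π hc))]
            simp
        rw [Finset.sum_congr rfl (fun π _ => this π)]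
        rw [Finset.sum_ite_eq' Finset.univ (1 : Equiv.Perm (Fin n))]
        simp
      rw [h0, map_zero] at hval
      simp at hval
    · intro σ
      rw [map_sum, Finset.smul_sum]
      refine Fintype.sum_equiv (Equiv.mulLeft σ) _ _ (fun π => ?_)
      rw [map_smul, diagPerm_bfun, smul_smul]
      have hcomp : ⇑σ ∘ (⇑π ∘ (Fin.castLE (Nat.sub_le n 1)))
          = ⇑(σ * π) ∘ (Fin.castLE (Nat.sub_le n 1)) := by
        funext i; simp
      rw [hcomp]
      show _ = (((Equiv.Perm.sign σ : ℤ) : ℂ) * ((Equiv.Perm.sign (σ * π) : ℤ) : ℂ)) •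
        bfun n (n-1) (⇑(σ * π) ∘ (Fin.castLE (Nat.sub_le n 1)))
      congr 1
      rw [Equiv.Perm.sign_mul]
      rcases Int.units_eq_one_or (Equiv.Perm.sign σ) with h | h <;> simp [h]
end

section
/- Let n ≥ 2 and let t be a natural number. There exists a Young diagram with exactly n cells whose first row has length at least n − t and whose first column has length at least n − t, if and only if t ≥ ⌊n/2⌋. -/
/-- Hook-shaped Young diagram with arm `a ≥ 1` and leg `b ≥ 1`. -/
def hookYD (a b : ℕ) (ha : 1 ≤ a) (hb : 1 ≤ b) : YoungDiagram where
  cells := ({0} ×ˢ Finset.range a) ∪ (Finset.range b ×ˢ {0})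
  isLowerSet := by
    rintro ⟨i1, j1⟩ ⟨i2, j2⟩ ⟨hi : i2 ≤ i1, hj : j2 ≤ j1⟩ hq
    simp only [Finset.coe_union, Finset.coe_product, Set.mem_union, Set.mem_prod,
      Finset.coe_singleton, Set.mem_singleton_iff, Finset.coe_range, Set.mem_Iio] at hq ⊢
    rcases hq with ⟨h1, h2⟩ | ⟨h1, h2⟩
    · exact Or.inl ⟨by omega, by omega⟩
    · exact Or.inr ⟨by omega, by omega⟩

lemma hookYD_card (a b : ℕ) (ha : 1 ≤ a) (hb : 1 ≤ b) :
    (hookYD a b ha hb).card = a + b - 1 := by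
  have hinter : (({0} ×ˢ Finset.range a) ∩ (Finset.range b ×ˢ {0}) : Finset (ℕ × ℕ))
      = {(0, 0)} := by
    ext ⟨i, j⟩
    simp only [Finset.mem_inter, Finset.mem_product, Finset.mem_singleton, Finset.mem_range,
      Prod.mk.injEq]
    omega
  have := Finset.card_union_add_card_inter ({0} ×ˢ Finset.range a)
    ((Finset.range b ×ˢ {0}) : Finset (ℕ × ℕ))
  rw [hinter] at this
  simp only [Finset.card_singleton, Finset.card_product, Finset.card_range] at this
  show (({0} ×ˢ Finset.range a) ∪ (Finset.range b ×ˢ {0}) : Finset (ℕ × ℕ)).card = a + b - 1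
  omega

/-- For `n ≥ 2` and `t : ℕ`, there exists a Young diagram with exactly `n`
cells whose first row and first column both have length at least `n - t` if and only if
`t ≥ ⌊n/2⌋`. -/
theorem stmt12 (n t : ℕ) (hn : 2 ≤ n) :
    (∃ μ : YoungDiagram, μ.card = n ∧ n - t ≤ μ.rowLen 0 ∧ n - t ≤ μ.colLen 0)
      ↔ n / 2 ≤ t := by
  constructor
  · rintro ⟨μ, hcard, hr, hc⟩
    -- row 0 and col 0 are subsets of cells overlapping in at most one cell
    have hsub : μ.row 0 ∪ μ.col 0 ⊆ μ.cells := by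
      intro c hc'
      rcases Finset.mem_union.mp hc' with h | h
      · exact (YoungDiagram.mem_row_iff.mp h).1
      · exact (YoungDiagram.mem_col_iff.mp h).1
    have hint : (μ.row 0 ∩ μ.col 0).card ≤ 1 := by
      apply Finset.card_le_one.mpr
      rintro ⟨i1, j1⟩ h1 ⟨i2, j2⟩ h2
      simp only [Finset.mem_inter, YoungDiagram.mem_row_iff, YoungDiagram.mem_col_iff] at h1 h2
      simp_all
    have hkey : μ.rowLen 0 + μ.colLen 0 ≤ n + 1 := by
      have h1 := Finset.card_union_add_card_inter (μ.row 0) (μ.col 0)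
      have h2 := Finset.card_le_card hsub
      have h3 : μ.cells.card = n := hcard
      rw [μ.rowLen_eq_card, μ.colLen_eq_card]
      omega
    omega
  · intro ht
    by_cases htn : t < n
    · refine ⟨hookYD (n - t) (t + 1) (by omega) (by omega), ?_, ?_, ?_⟩
      · rw [hookYD_card]; omega
      · have hmem : ((0 : ℕ), n - t - 1) ∈ hookYD (n - t) (t + 1) (by omega) (by omega) := by
          show _ ∈ (hookYD _ _ _ _).cells
          simp only [hookYD, Finset.mem_union, Finset.mem_product, Finset.mem_singleton,
            Finset.mem_range]
          exact Or.inl ⟨trivial, by omega⟩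
        have := YoungDiagram.mem_iff_lt_rowLen.mp hmem
        omega
      · have hmem : ((n - t - 1 : ℕ), (0 : ℕ)) ∈ hookYD (n - t) (t + 1) (by omega) (by omega) := by
          show _ ∈ (hookYD _ _ _ _).cells
          simp only [hookYD, Finset.mem_union, Finset.mem_product, Finset.mem_singleton,
            Finset.mem_range]
          exact Or.inr ⟨by omega, trivial⟩
        have := YoungDiagram.mem_iff_lt_colLen.mp hmem
        omega
    · refine ⟨hookYD 1 n (by omega) (by omega), ?_, ?_, ?_⟩
      · rw [hookYD_card]; omega
      · omega
      · omega
end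

section
/- Let p be a prime and n ≥ 1. For x, y ∈ (ℤ/pℤ)ⁿ and z ∈ ℤ/pℤ, let A(x,y,z) be the Heisenberg matrix determined by (x,y,z). Then the number of vectors v ∈ (ℤ/pℤ)^{n+2} with A(x,y,z)·v = v equals: p^{n+2} if (x,y,z) = (0,0,0); pⁿ if x ≠ 0 and y ≠ 0; and p^{n+1} in all other cases. -/
/-- The Heisenberg matrix `A(x,y,z)`: the `(n+2) × (n+2)` matrix over `ℤ/pℤ` with `1`'s on
the main diagonal, first row `(1, x₁, …, xₙ, z)`, last column `(z, y₁, …, yₙ, 1)ᵀ`, and all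
other entries `0`. -/
def heis (p n : ℕ) (x y : Fin n → ZMod p) (z : ZMod p) :
    Matrix (Fin (n + 2)) (Fin (n + 2)) (ZMod p) :=
  Matrix.of fun i j =>
    if i = j then 1
    else if i.val = 0 ∧ j.val = n + 1 then z
    else if h : i.val = 0 ∧ j.val - 1 < n then x ⟨j.val - 1, h.2⟩
    else if h : j.val = n + 1 ∧ i.val - 1 < n then y ⟨i.val - 1, h.2⟩
    else 0

namespace Stmt13Aux

open Finset

/-- Counting the kernel of a surjective linear map over `ZMod p`. -/
lemma card_ker_mul (p : ℕ) [Fact p.Prime] {V W : Type*} [AddCommGroup V]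
    [Module (ZMod p) V] [Fintype V] [AddCommGroup W] [Module (ZMod p) W] [Fintype W]
    (φ : V →ₗ[ZMod p] W) (hφ : Function.Surjective φ)
    [DecidablePred fun v => φ v = 0] :
    (Finset.univ.filter fun v => φ v = 0).card * Fintype.card W = Fintype.card V := by
  classical
  have e : (V ⧸ LinearMap.ker φ) ≃ W := (LinearMap.quotKerEquivOfSurjective φ hφ).toEquiv
  have h := Submodule.card_eq_card_quotient_mul_card (LinearMap.ker φ)
  rw [Nat.card_congr e] at h
  have hker : Nat.card (LinearMap.ker φ) = (Finset.univ.filter fun v => φ v = 0).card := by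
    rw [Nat.card_congr (Equiv.subtypeEquivRight (fun v => (LinearMap.mem_ker (f := φ))))]
    rw [Nat.card_eq_fintype_card, Fintype.card_subtype]
  rw [hker, Nat.card_eq_fintype_card, Nat.card_eq_fintype_card] at h
  rw [h, mul_comm]

variable {p n : ℕ}

def lfun (p m : ℕ) (c : Fin m → ZMod p) : (Fin m → ZMod p) →ₗ[ZMod p] ZMod p :=
  ∑ i, c i • LinearMap.proj i

lemma lfun_apply (m : ℕ) (c v : Fin m → ZMod p) : lfun p m c v = ∑ i, c i * v i := by
  simp [lfun]

lemma lfun_single (m : ℕ) (c : Fin m → ZMod p) (j : Fin m) (t : ZMod p) :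
    lfun p m c (Pi.single j t) = c j * t := by
  classical
  rw [lfun_apply]
  simp [Pi.single_apply, mul_ite, Finset.sum_ite_eq']

def mid {n : ℕ} (k : Fin n) : Fin (n + 2) := k.castSucc.succ

def lst (n : ℕ) : Fin (n + 2) := Fin.last (n + 1)

lemma mid_val {n : ℕ} (k : Fin n) : (mid k).val = k.val + 1 := rfl

lemma lst_val (n : ℕ) : (lst n).val = n + 1 := rfl

lemma zero_val (n : ℕ) : (0 : Fin (n + 2)).val = 0 := rfl

lemma mid_ne_lst {n : ℕ} (k : Fin n) : mid k ≠ lst n := by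
  intro h
  have := congrArg Fin.val h
  rw [mid_val, lst_val] at this
  have := k.isLt; omega

lemma sum_split {n : ℕ} {M : Type*} [AddCommMonoid M] (g : Fin (n + 2) → M) :
    ∑ j, g j = g 0 + ((∑ k, g (mid k)) + g (lst n)) := by
  rw [Fin.sum_univ_succ, Fin.sum_univ_castSucc]
  rfl

def cvec (p n : ℕ) (x : Fin n → ZMod p) (z : ZMod p) : Fin (n + 2) → ZMod p :=
  Fin.cons 0 (Fin.snoc x z)

lemma cvec_zero (x : Fin n → ZMod p) (z : ZMod p) : cvec p n x z 0 = 0 := rfl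

lemma cvec_mid (x : Fin n → ZMod p) (z : ZMod p) (k : Fin n) :
    cvec p n x z (mid k) = x k := by
  unfold cvec mid
  rw [Fin.cons_succ, Fin.snoc_castSucc]

lemma cvec_lst (x : Fin n → ZMod p) (z : ZMod p) :
    cvec p n x z (lst n) = z := by
  unfold cvec lst
  rw [← Fin.succ_last, Fin.cons_succ, Fin.snoc_last]

variable (x y : Fin n → ZMod p) (z : ZMod p)

lemma e00 : heis p n x y z 0 0 = 1 := by
  simp [heis]

lemma e0mid (k : Fin n) : heis p n x y z 0 (mid k) = x k := by
  have hk := k.isLt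
  have h1 : (0 : Fin (n + 2)) ≠ mid k := by
    intro h; have := congrArg Fin.val h; rw [mid_val, zero_val] at this; omega
  have h2 : ¬((0 : Fin (n + 2)).val = 0 ∧ (mid k).val = n + 1) := by
    rw [mid_val, zero_val]; omega
  have h3 : (0 : Fin (n + 2)).val = 0 ∧ (mid k).val - 1 < n := ⟨rfl, by rw [mid_val]; omega⟩
  simp only [heis, Matrix.of_apply]
  rw [if_neg h1, if_neg h2, dif_pos h3]
  exact congrArg x (Fin.ext (show (mid k).val - 1 = k.val by rw [mid_val]; omega))

lemma e0lst : heis p n x y z 0 (lst n) = z := by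
  have h1 : (0 : Fin (n + 2)) ≠ lst n := by
    intro h; have := congrArg Fin.val h; rw [lst_val, zero_val] at this; omega
  simp only [heis, Matrix.of_apply]
  rw [if_neg h1, if_pos ⟨rfl, rfl⟩]

lemma emid0 (k : Fin n) : heis p n x y z (mid k) 0 = 0 := by
  have h1 : mid k ≠ (0 : Fin (n + 2)) := by
    intro h; have := congrArg Fin.val h; rw [mid_val, zero_val] at this; omega
  have h2 : ¬((mid k).val = 0 ∧ (0 : Fin (n + 2)).val = n + 1) := by
    rw [mid_val]; omega
  have h3 : ¬((mid k).val = 0 ∧ (0 : Fin (n + 2)).val - 1 < n) := by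
    rw [mid_val]; omega
  have h4 : ¬((0 : Fin (n + 2)).val = n + 1 ∧ (mid k).val - 1 < n) := by
    rw [zero_val]; omega
  simp only [heis, Matrix.of_apply]
  rw [if_neg h1, if_neg h2, dif_neg h3, dif_neg h4]

lemma emidmid (k k' : Fin n) :
    heis p n x y z (mid k) (mid k') = if k = k' then 1 else 0 := by
  by_cases h : k = k'
  · subst h; rw [if_pos rfl]
    simp [heis]
  · rw [if_neg h]
    have hk' := k'.isLt
    have h1 : mid k ≠ mid k' := by
      intro hk; apply h; apply Fin.ext
      have := congrArg Fin.val hk; rw [mid_val, mid_val] at this; omega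
    have h2 : ¬((mid k).val = 0 ∧ (mid k').val = n + 1) := by
      rw [mid_val]; omega
    have h3 : ¬((mid k).val = 0 ∧ (mid k').val - 1 < n) := by
      rw [mid_val]; omega
    have h4 : ¬((mid k').val = n + 1 ∧ (mid k).val - 1 < n) := by
      rw [mid_val k']; omega
    simp only [heis, Matrix.of_apply]
    rw [if_neg h1, if_neg h2, dif_neg h3, dif_neg h4]

lemma emidlst (k : Fin n) : heis p n x y z (mid k) (lst n) = y k := by
  have hk := k.isLt
  have h2 : ¬((mid k).val = 0 ∧ (lst n).val = n + 1) := by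
    rw [mid_val]; omega
  have h3 : ¬((mid k).val = 0 ∧ (lst n).val - 1 < n) := by
    rw [mid_val]; omega
  have h4 : (lst n).val = n + 1 ∧ (mid k).val - 1 < n := ⟨rfl, by rw [mid_val]; omega⟩
  simp only [heis, Matrix.of_apply]
  rw [if_neg (mid_ne_lst k), if_neg h2, dif_neg h3, dif_pos h4]
  exact congrArg y (Fin.ext (show (mid k).val - 1 = k.val by rw [mid_val]; omega))

lemma elst0 : heis p n x y z (lst n) 0 = 0 := by
  have h1 : lst n ≠ (0 : Fin (n + 2)) := by
    intro h; have := congrArg Fin.val h; rw [lst_val, zero_val] at this; omega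
  have h2 : ¬((lst n).val = 0 ∧ (0 : Fin (n + 2)).val = n + 1) := by
    rw [lst_val]; omega
  have h3 : ¬((lst n).val = 0 ∧ (0 : Fin (n + 2)).val - 1 < n) := by
    rw [lst_val]; omega
  have h4 : ¬((0 : Fin (n + 2)).val = n + 1 ∧ (lst n).val - 1 < n) := by
    rw [zero_val]; omega
  simp only [heis, Matrix.of_apply]
  rw [if_neg h1, if_neg h2, dif_neg h3, dif_neg h4]

lemma elstmid (k : Fin n) : heis p n x y z (lst n) (mid k) = 0 := by
  have hk := k.isLt
  have h1 : lst n ≠ mid k := fun h => mid_ne_lst k h.symm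
  have h2 : ¬((lst n).val = 0 ∧ (mid k).val = n + 1) := by
    rw [lst_val]; omega
  have h3 : ¬((lst n).val = 0 ∧ (mid k).val - 1 < n) := by
    rw [lst_val]; omega
  have h4 : ¬((mid k).val = n + 1 ∧ (lst n).val - 1 < n) := by
    rw [mid_val]; omega
  simp only [heis, Matrix.of_apply]
  rw [if_neg h1, if_neg h2, dif_neg h3, dif_neg h4]

lemma elstlst : heis p n x y z (lst n) (lst n) = 1 := by
  simp [heis]

lemma row0 (v : Fin (n + 2) → ZMod p) :
    (heis p n x y z).mulVec v 0 =
      v 0 + ((∑ k, x k * v (mid k)) + z * v (lst n)) := by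
  show ∑ j, heis p n x y z 0 j * v j = _
  rw [sum_split (fun j => heis p n x y z 0 j * v j), e00, e0lst, one_mul]
  congr 2
  exact Finset.sum_congr rfl fun k _ => by rw [e0mid]

lemma rowmid (v : Fin (n + 2) → ZMod p) (k : Fin n) :
    (heis p n x y z).mulVec v (mid k) = v (mid k) + y k * v (lst n) := by
  show ∑ j, heis p n x y z (mid k) j * v j = _
  rw [sum_split (fun j => heis p n x y z (mid k) j * v j), emid0, emidlst, zero_mul,
    zero_add]
  congr 1
  rw [Finset.sum_congr rfl fun k' _ => by rw [emidmid]]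
  simp [ite_mul]

lemma rowlst (v : Fin (n + 2) → ZMod p) :
    (heis p n x y z).mulVec v (lst n) = v (lst n) := by
  show ∑ j, heis p n x y z (lst n) j * v j = _
  rw [sum_split (fun j => heis p n x y z (lst n) j * v j), elst0, elstlst, zero_mul,
    one_mul, zero_add]
  rw [Finset.sum_congr rfl fun k' _ => by rw [elstmid]]
  simp

lemma key (v : Fin (n + 2) → ZMod p) :
    (heis p n x y z).mulVec v = v ↔
      ((∑ k, x k * v (mid k)) + z * v (lst n) = 0 ∧ ∀ k, y k * v (lst n) = 0) := by
  constructor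
  · intro h
    constructor
    · have h0 := (row0 x y z v).symm.trans (congrFun h 0)
      rwa [add_eq_left] at h0
    · intro k
      have hk := (rowmid x y z v k).symm.trans (congrFun h (mid k))
      rwa [add_eq_left] at hk
  · rintro ⟨h1, h2⟩
    funext i
    refine Fin.cases ?_ (fun j => ?_) i
    · rw [row0, h1, add_zero]
    · refine Fin.lastCases ?_ (fun k => ?_) j
      · rw [Fin.succ_last]; exact rowlst x y z v
      · rw [show (k.castSucc).succ = mid k from rfl, rowmid, h2 k, add_zero]

end Stmt13Aux

open Stmt13Aux Finset in
/-- The number of vectors `v ∈ (ℤ/pℤ)^{n+2}` fixed by the Heisenberg matrix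
`A(x,y,z)` is `p^{n+2}` if `(x,y,z) = (0,0,0)`, `pⁿ` if `x ≠ 0` and `y ≠ 0`, and `p^{n+1}`
in all other cases. -/
theorem stmt13 (p : ℕ) [Fact p.Prime] (n : ℕ) (hn : 1 ≤ n)
    (x y : Fin n → ZMod p) (z : ZMod p) :
    (Finset.univ.filter
        (fun v : Fin (n + 2) → ZMod p => (heis p n x y z).mulVec v = v)).card =
      if x = 0 ∧ y = 0 ∧ z = 0 then p ^ (n + 2)
      else if x ≠ 0 ∧ y ≠ 0 then p ^ n
      else p ^ (n + 1) := by
  have hp : 0 < p := (Fact.out : p.Prime).pos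
  have hcardV : Fintype.card (Fin (n + 2) → ZMod p) = p ^ (n + 2) := by
    simp [ZMod.card]
  have hce : ∀ v : Fin (n + 2) → ZMod p,
      lfun p (n + 2) (cvec p n x z) v = (∑ k, x k * v (mid k)) + z * v (lst n) := by
    intro v
    rw [lfun_apply, sum_split (fun j => cvec p n x z j * v j), cvec_zero, cvec_lst,
      zero_mul, zero_add]
    congr 1
    exact Finset.sum_congr rfl fun k _ => by rw [cvec_mid]
  by_cases hA : x = 0 ∧ y = 0 ∧ z = 0
  · rw [if_pos hA]
    obtain ⟨hx, hy, hz⟩ := hA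
    subst hx; subst hy; subst hz
    rw [Finset.filter_true_of_mem (fun v _ => (key 0 0 0 v).mpr (by simp))]
    rw [Finset.card_univ, hcardV]
  rw [if_neg hA]
  by_cases hB : x ≠ 0 ∧ y ≠ 0
  · rw [if_pos hB]
    obtain ⟨hx, hy⟩ := hB
    obtain ⟨k₀, hk₀⟩ := Function.ne_iff.mp hy
    obtain ⟨k₁, hk₁⟩ := Function.ne_iff.mp hx
    set ψ : (Fin (n + 2) → ZMod p) →ₗ[ZMod p] (ZMod p × ZMod p) :=
      LinearMap.prod (LinearMap.proj (lst n)) (lfun p (n + 2) (cvec p n x z)) with hψ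
    have hψap : ∀ v, ψ v = (v (lst n), lfun p (n + 2) (cvec p n x z) v) := fun v => rfl
    have hsurj : Function.Surjective ψ := by
      rintro ⟨a, b⟩
      set w : Fin (n + 2) → ZMod p :=
        Pi.single (lst n) a + Pi.single (mid k₁) ((x k₁)⁻¹ * (b - z * a)) with hw
      refine ⟨w, ?_⟩
      rw [hψap]
      have h1 : w (lst n) = a := by
        rw [hw]
        simp [Pi.single_eq_same, Pi.single_eq_of_ne (Ne.symm (mid_ne_lst k₁))]
      have h2 : lfun p (n + 2) (cvec p n x z) w = b := by
        rw [hw]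
        rw [map_add, lfun_single, lfun_single, cvec_lst, cvec_mid,
          ← mul_assoc, mul_inv_cancel₀ hk₁, one_mul]
        ring
      rw [h1, h2]
    have hiff : ∀ v : Fin (n + 2) → ZMod p,
        ((heis p n x y z).mulVec v = v) ↔ ψ v = 0 := by
      intro v
      rw [key, hψap, Prod.mk_eq_zero, hce]
      constructor
      · rintro ⟨h1, h2⟩
        have hvL : v (lst n) = 0 := by
          rcases mul_eq_zero.mp (h2 k₀) with h | h
          · exact absurd h hk₀
          · exact h
        refine ⟨hvL, ?_⟩
        rw [hvL, mul_zero, add_zero] at h1 ⊢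
        exact h1
      · rintro ⟨h1, h2⟩
        rw [h1, mul_zero, add_zero] at h2
        exact ⟨by rw [h1, mul_zero, add_zero]; exact h2, fun k => by rw [h1, mul_zero]⟩
    have hfilt : (Finset.univ.filter
          fun v : Fin (n + 2) → ZMod p => (heis p n x y z).mulVec v = v)
        = Finset.univ.filter fun v => ψ v = 0 := by
      ext v
      simp only [Finset.mem_filter, Finset.mem_univ, true_and]
      exact hiff v
    rw [hfilt]
    have hc := card_ker_mul p ψ hsurj
    rw [hcardV] at hc
    have hW : Fintype.card (ZMod p × ZMod p) = p * p := by simp [ZMod.card]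
    rw [hW] at hc
    have hpp : p ^ n * (p * p) = p ^ (n + 2) := by ring
    exact Nat.eq_of_mul_eq_mul_right (by positivity) (hc.trans hpp.symm)
  · rw [if_neg hB]
    by_cases hx : x = 0
    · subst hx
      have hyz : y ≠ 0 ∨ z ≠ 0 := by
        by_contra h
        push_neg at h
        exact hA ⟨rfl, h.1, h.2⟩
      set φ : (Fin (n + 2) → ZMod p) →ₗ[ZMod p] ZMod p := LinearMap.proj (lst n) with hφ
      have hsurj : Function.Surjective φ := fun b => ⟨fun _ => b, rfl⟩
      have hiff : ∀ v : Fin (n + 2) → ZMod p,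
          ((heis p n 0 y z).mulVec v = v) ↔ φ v = 0 := by
        intro v
        rw [key]
        have hφv : φ v = v (lst n) := rfl
        rw [hφv]
        constructor
        · rintro ⟨h1, h2⟩
          simp only [Pi.zero_apply, zero_mul, Finset.sum_const_zero, zero_add] at h1
          rcases hyz with hy | hz
          · obtain ⟨k₀, hk₀⟩ := Function.ne_iff.mp hy
            rcases mul_eq_zero.mp (h2 k₀) with h | h
            · exact absurd h hk₀
            · exact h
          · rcases mul_eq_zero.mp h1 with h | h
            · exact absurd h hz
            · exact h
        · intro h
          exact ⟨by simp [h], fun k => by rw [h, mul_zero]⟩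
      have hfilt : (Finset.univ.filter
            fun v : Fin (n + 2) → ZMod p => (heis p n 0 y z).mulVec v = v)
          = Finset.univ.filter fun v => φ v = 0 := by
        ext v
        simp only [Finset.mem_filter, Finset.mem_univ, true_and]
        exact hiff v
      rw [hfilt]
      have hc := card_ker_mul p φ hsurj
      rw [hcardV, ZMod.card] at hc
      have hpp : p ^ (n + 1) * p = p ^ (n + 2) := by ring
      exact Nat.eq_of_mul_eq_mul_right hp (hc.trans hpp.symm)
    · have hy : y = 0 := by
        by_contra hy
        exact hB ⟨hx, hy⟩
      subst hy
      obtain ⟨k₁, hk₁⟩ := Function.ne_iff.mp hx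
      set φ : (Fin (n + 2) → ZMod p) →ₗ[ZMod p] ZMod p :=
        lfun p (n + 2) (cvec p n x z) with hφ
      have hsurj : Function.Surjective φ := by
        intro b
        refine ⟨Pi.single (mid k₁) ((x k₁)⁻¹ * b), ?_⟩
        rw [hφ, lfun_single, cvec_mid, ← mul_assoc, mul_inv_cancel₀ hk₁, one_mul]
      have hiff : ∀ v : Fin (n + 2) → ZMod p,
          ((heis p n x 0 z).mulVec v = v) ↔ φ v = 0 := by
        intro v
        rw [key, hφ, hce]
        constructor
        · rintro ⟨h1, _⟩
          exact h1
        · intro h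
          exact ⟨h, fun k => by simp⟩
      have hfilt : (Finset.univ.filter
            fun v : Fin (n + 2) → ZMod p => (heis p n x 0 z).mulVec v = v)
          = Finset.univ.filter fun v => φ v = 0 := by
        ext v
        simp only [Finset.mem_filter, Finset.mem_univ, true_and]
        exact hiff v
      rw [hfilt]
      have hc := card_ker_mul p φ hsurj
      rw [hcardV, ZMod.card] at hc
      have hpp : p ^ (n + 1) * p = p ^ (n + 2) := by ring
      exact Nat.eq_of_mul_eq_mul_right hp (hc.trans hpp.symm)
end

section
/- Let p be a prime and n ≥ 1, and let the Heisenberg group G(p,n) of matrices A(x,y,z) act on (ℤ/pℤ)^{n+2} by matrix-vector multiplication. Then the number of orbits of this action equals pⁿ + 2(p − 1). -/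
namespace Hstmt
variable {p n : ℕ}

def mid (n : ℕ) (m : Fin n) : Fin (n + 2) := m.castSucc.succ
def lst (n : ℕ) : Fin (n + 2) := Fin.last (n + 1)

lemma mid_val (m : Fin n) : (mid n m).val = m.val + 1 := rfl
lemma lst_val : (lst n).val = n + 1 := rfl

lemma fin_cases (i : Fin (n + 2)) : i = 0 ∨ (∃ m : Fin n, i = mid n m) ∨ i = lst n := by
  rcases Nat.lt_or_ge i.val 1 with h | h
  · left; exact Fin.ext (by simp only [Fin.val_zero]; omega)
  rcases Nat.lt_or_ge i.val (n + 1) with h2 | h2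
  · right; left; exact ⟨⟨i.val - 1, by omega⟩, Fin.ext (by simp [mid_val]; omega)⟩
  · right; right; exact Fin.ext (by simp [lst_val]; omega)

lemma sum_split (f : Fin (n + 2) → ZMod p) :
    ∑ j, f j = f 0 + (∑ k : Fin n, f (mid n k)) + f (lst n) := by
  rw [Fin.sum_univ_succ, Fin.sum_univ_castSucc]
  simp [mid, lst, Fin.succ_last]
  ring

lemma mulVec_apply (x y : Fin n → ZMod p) (z : ZMod p) (v : Fin (n + 2) → ZMod p)
    (i : Fin (n + 2)) :
    (heis p n x y z).mulVec v i = ∑ j, heis p n x y z i j * v j := rfl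

lemma heis_zero_zero (x y : Fin n → ZMod p) (z : ZMod p) :
    heis p n x y z 0 0 = 1 := by simp [heis]

lemma heis_zero_mid (x y : Fin n → ZMod p) (z : ZMod p) (k : Fin n) :
    heis p n x y z 0 (mid n k) = x k := by
  have h0 : ((0 : Fin (n+2)) : ℕ) = 0 := rfl
  have hne : (0 : Fin (n+2)) ≠ mid n k := by
    intro h; have := congrArg Fin.val h; simp [mid_val, h0] at this
  simp [heis, hne, mid_val, h0, Fin.is_lt]
  intro h; exact absurd h k.is_lt.ne

lemma heis_zero_lst (x y : Fin n → ZMod p) (z : ZMod p) :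
    heis p n x y z 0 (lst n) = z := by
  have hne : (0 : Fin (n+2)) ≠ lst n := by
    intro h; have := congrArg Fin.val h; simp [lst_val] at this
  simp [heis, hne, lst_val]

lemma heis_mid_zero (x y : Fin n → ZMod p) (z : ZMod p) (m : Fin n) :
    heis p n x y z (mid n m) 0 = 0 := by
  have hne : (mid n m) ≠ 0 := by
    intro h; have := congrArg Fin.val h; simp [mid_val] at this
  simp [heis, hne, mid_val]

lemma heis_mid_mid (x y : Fin n → ZMod p) (z : ZMod p) (m k : Fin n) :
    heis p n x y z (mid n m) (mid n k) = if m = k then 1 else 0 := by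
  by_cases h : m = k
  · simp [heis, h]
  · have hne : mid n m ≠ mid n k := by
      intro he; exact h (Fin.ext (by have := congrArg Fin.val he; simpa [mid_val] using this))
    simp [heis, hne, h, mid_val]
    have hm0 : mid n m ≠ 0 := by
      intro h0; have := congrArg Fin.val h0; simp [mid_val] at this
    simp [hm0, k.is_lt.ne]

lemma heis_mid_lst (x y : Fin n → ZMod p) (z : ZMod p) (m : Fin n) :
    heis p n x y z (mid n m) (lst n) = y m := by
  have hne : mid n m ≠ lst n := by
    intro h; have := congrArg Fin.val h; simp [mid_val, lst_val] at this; omega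
  have : (mid n m).val - 1 < n := by simp [mid_val]
  simp [heis, hne, mid_val, lst_val, this]
  intro h0; have := congrArg Fin.val h0; simp [mid_val] at this

lemma heis_lst_zero (x y : Fin n → ZMod p) (z : ZMod p) :
    heis p n x y z (lst n) 0 = 0 := by
  have hne : lst n ≠ 0 := by
    intro h; have := congrArg Fin.val h; simp [lst_val] at this
  simp [heis, hne, lst_val]

lemma heis_lst_mid (x y : Fin n → ZMod p) (z : ZMod p) (k : Fin n) :
    heis p n x y z (lst n) (mid n k) = 0 := by
  have hne : lst n ≠ mid n k := by
    intro h; have := congrArg Fin.val h; simp [mid_val, lst_val] at this; omega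
  simp [heis, hne, mid_val, lst_val]
  have hl : lst n ≠ 0 := by
    intro h; have := congrArg Fin.val h; simp [lst_val] at this
  simp [hl]

lemma heis_lst_lst (x y : Fin n → ZMod p) (z : ZMod p) :
    heis p n x y z (lst n) (lst n) = 1 := by simp [heis]

lemma mulVec_zero (x y : Fin n → ZMod p) (z : ZMod p) (v : Fin (n + 2) → ZMod p) :
    (heis p n x y z).mulVec v 0 = v 0 + (∑ k : Fin n, x k * v (mid n k)) + z * v (lst n) := by
  rw [mulVec_apply, sum_split]
  simp [heis_zero_zero, heis_zero_mid, heis_zero_lst]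

lemma mulVec_mid (x y : Fin n → ZMod p) (z : ZMod p) (v : Fin (n + 2) → ZMod p) (m : Fin n) :
    (heis p n x y z).mulVec v (mid n m) = v (mid n m) + y m * v (lst n) := by
  rw [mulVec_apply, sum_split]
  simp [heis_mid_zero, heis_mid_mid, heis_mid_lst, Finset.sum_ite_eq, ite_mul]

lemma mulVec_lst (x y : Fin n → ZMod p) (z : ZMod p) (v : Fin (n + 2) → ZMod p) :
    (heis p n x y z).mulVec v (lst n) = v (lst n) := by
  rw [mulVec_apply, sum_split]
  simp [heis_lst_zero, heis_lst_mid, heis_lst_lst]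


def emb (p n : ℕ) (a : ZMod p) (u : Fin n → ZMod p) (b : ZMod p) : Fin (n + 2) → ZMod p :=
  Fin.cons a (Fin.snoc u b)

lemma emb_zero (a : ZMod p) (u : Fin n → ZMod p) (b : ZMod p) : emb p n a u b 0 = a := rfl

lemma emb_mid (a : ZMod p) (u : Fin n → ZMod p) (b : ZMod p) (m : Fin n) :
    emb p n a u b (mid n m) = u m := by
  simp [emb, mid, Fin.cons_succ, Fin.snoc_castSucc]

lemma emb_lst (a : ZMod p) (u : Fin n → ZMod p) (b : ZMod p) :
    emb p n a u b (lst n) = b := by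
  have h : lst n = (Fin.last n).succ := by
    apply Fin.ext; simp [lst_val]
  rw [emb, h, Fin.cons_succ, Fin.snoc_last]

/-- The orbit of `v`. -/
def orb (p n : ℕ) (v : Fin (n + 2) → ZMod p) : Set (Fin (n + 2) → ZMod p) :=
  {w | ∃ (x y : Fin n → ZMod p) (z : ZMod p), (heis p n x y z).mulVec v = w}

lemma orb_case1 [Fact p.Prime] (v : Fin (n + 2) → ZMod p) (hb : v (lst n) ≠ 0) :
    orb p n v = {w | w (lst n) = v (lst n)} := by
  ext w
  constructor
  · rintro ⟨x, y, z, rfl⟩; exact mulVec_lst x y z v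
  · intro hw
    refine ⟨0, fun m => (w (mid n m) - v (mid n m)) * (v (lst n))⁻¹,
      (w 0 - v 0) * (v (lst n))⁻¹, funext fun i => ?_⟩
    rcases fin_cases i with rfl | ⟨m, rfl⟩ | rfl
    · rw [mulVec_zero]
      simp [mul_assoc, inv_mul_cancel₀ hb]
    · rw [mulVec_mid]
      simp [mul_assoc, inv_mul_cancel₀ hb]
    · rw [mulVec_lst]; exact hw.symm

lemma orb_case2 [Fact p.Prime] (v : Fin (n + 2) → ZMod p) (hb : v (lst n) = 0)
    (m₀ : Fin n) (hu : v (mid n m₀) ≠ 0) :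
    orb p n v = {w | (∀ m, w (mid n m) = v (mid n m)) ∧ w (lst n) = 0} := by
  ext w
  constructor
  · rintro ⟨x, y, z, rfl⟩
    refine ⟨fun m => ?_, ?_⟩
    · rw [mulVec_mid, hb, mul_zero, add_zero]
    · rw [mulVec_lst]; exact hb
  · rintro ⟨hmid, hlast⟩
    refine ⟨fun k => if k = m₀ then (w 0 - v 0) * (v (mid n m₀))⁻¹ else 0, 0, 0,
      funext fun i => ?_⟩
    rcases fin_cases i with rfl | ⟨m, rfl⟩ | rfl
    · rw [mulVec_zero, hb]
      have hs : ∀ k ∈ Finset.univ, (if k = m₀ then (w 0 - v 0) * (v (mid n m₀))⁻¹ else 0) * v (mid n k) = (if k = m₀ then (w 0 - v 0) * ((v (mid n m₀))⁻¹ * v (mid n k)) else 0) := by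
        intro k _; split <;> simp [mul_assoc]
      rw [Finset.sum_congr rfl hs]
      simp [Finset.sum_ite_eq', inv_mul_cancel₀ hu]
    · rw [mulVec_mid, hb]; simp [hmid m]
    · rw [mulVec_lst, hb]; exact hlast.symm

lemma orb_case3 (v : Fin (n + 2) → ZMod p) (hb : v (lst n) = 0)
    (hu : ∀ m, v (mid n m) = 0) : orb p n v = {v} := by
  ext w
  constructor
  · rintro ⟨x, y, z, rfl⟩
    refine Set.mem_singleton_iff.mpr (funext fun i => ?_)
    rcases fin_cases i with rfl | ⟨m, rfl⟩ | rfl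
    · rw [mulVec_zero, hb]; simp [hu]
    · rw [mulVec_mid, hb]; simp
    · rw [mulVec_lst]
  · rintro rfl
    refine ⟨0, 0, 0, funext fun i => ?_⟩
    rcases fin_cases i with rfl | ⟨m, rfl⟩ | rfl
    · rw [mulVec_zero, hb]; simp
    · rw [mulVec_mid, hb]; simp
    · rw [mulVec_lst]


def setA (p n : ℕ) : Set (Set (Fin (n + 2) → ZMod p)) :=
  (fun b => {w | w (lst n) = b}) '' {b | b ≠ 0}

def setB (p n : ℕ) : Set (Set (Fin (n + 2) → ZMod p)) :=
  (fun u : Fin n → ZMod p => {w | (∀ m, w (mid n m) = u m) ∧ w (lst n) = 0}) '' {u | u ≠ 0}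

def setC (p n : ℕ) : Set (Set (Fin (n + 2) → ZMod p)) :=
  Set.range (fun a : ZMod p => ({emb p n a 0 0} : Set _))

lemma classification [Fact p.Prime] :
    {S | ∃ v, S = orb p n v} = setA p n ∪ setB p n ∪ setC p n := by
  ext S
  constructor
  · rintro ⟨v, rfl⟩
    by_cases hb : v (lst n) ≠ 0
    · left; left
      exact ⟨v (lst n), hb, (orb_case1 v hb).symm⟩
    push_neg at hb
    by_cases hu : ∃ m, v (mid n m) ≠ 0
    · left; right
      obtain ⟨m₀, hm₀⟩ := hu
      refine ⟨fun m => v (mid n m), ?_, ?_⟩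
      · intro h0
        exact hm₀ (congrFun h0 m₀)
      · exact (orb_case2 v hb m₀ hm₀).symm
    · right
      push_neg at hu
      refine ⟨v 0, ?_⟩
      have hv : emb p n (v 0) 0 0 = v := by
        funext i
        rcases fin_cases i with rfl | ⟨m, rfl⟩ | rfl
        · rfl
        · rw [emb_mid, hu m]; rfl
        · rw [emb_lst, hb]
      show {emb p n (v 0) 0 0} = orb p n v
      rw [hv, orb_case3 v hb hu]
  · rintro ((⟨b, hb, rfl⟩ | ⟨u, hu, rfl⟩) | ⟨a, rfl⟩)
    · refine ⟨emb p n 0 0 b, ?_⟩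
      rw [orb_case1 _ (by rw [emb_lst]; exact hb), emb_lst]
    · obtain ⟨m₀, hm₀⟩ := Function.ne_iff.mp hu
      refine ⟨emb p n 0 u 0, ?_⟩
      rw [orb_case2 _ (emb_lst _ _ _) m₀ (by rw [emb_mid]; exact hm₀)]
      simp only [emb_mid]
    · exact ⟨emb p n a 0 0, (orb_case3 _ (emb_lst _ _ _) (fun m => emb_mid _ _ _ _)).symm⟩


lemma ncard_setA [Fact p.Prime] : (setA p n).ncard = p - 1 := by
  haveI : NeZero p := ⟨(Fact.out : p.Prime).pos.ne'⟩
  rw [setA, Set.ncard_image_of_injective _ ?_]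
  · have h : {b : ZMod p | b ≠ 0} = ({0} : Set (ZMod p))ᶜ := by ext b; simp
    have h2 := Set.ncard_add_ncard_compl ({0} : Set (ZMod p))
    rw [Set.ncard_singleton] at h2
    have h3 : Nat.card (ZMod p) = p := by
      rw [Nat.card_eq_fintype_card, ZMod.card]
    rw [h]; omega
  · intro b1 b2 h
    beta_reduce at h
    have h1 : emb p n 0 0 b1 ∈ {w | w (lst n) = b1} := emb_lst 0 0 b1
    rw [h] at h1
    exact (emb_lst 0 0 b1).symm.trans h1

lemma ncard_setB [Fact p.Prime] : (setB p n).ncard = p ^ n - 1 := by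
  haveI : NeZero p := ⟨(Fact.out : p.Prime).pos.ne'⟩
  rw [setB, Set.ncard_image_of_injective _ ?_]
  · have h : {u : Fin n → ZMod p | u ≠ 0} = ({0} : Set (Fin n → ZMod p))ᶜ := by ext u; simp
    have h2 := Set.ncard_add_ncard_compl ({0} : Set (Fin n → ZMod p))
    rw [Set.ncard_singleton] at h2
    have h3 : Nat.card (Fin n → ZMod p) = p ^ n := by
      rw [Nat.card_eq_fintype_card, Fintype.card_fun, ZMod.card, Fintype.card_fin]
    rw [h]; omega
  · intro u1 u2 h
    beta_reduce at h
    have h1 : emb p n 0 u1 0 ∈ {w | (∀ m, w (mid n m) = u1 m) ∧ w (lst n) = 0} :=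
      ⟨fun m => emb_mid 0 u1 0 m, emb_lst 0 u1 0⟩
    rw [h] at h1
    exact funext fun m => (emb_mid 0 u1 0 m).symm.trans (h1.1 m)

lemma ncard_setC [Fact p.Prime] : (setC p n).ncard = p := by
  haveI : NeZero p := ⟨(Fact.out : p.Prime).pos.ne'⟩
  rw [setC, ← Set.image_univ, Set.ncard_image_of_injective _ ?_, Set.ncard_univ,
    Nat.card_eq_fintype_card, ZMod.card]
  intro a1 a2 h
  have h1 : emb p n a1 0 0 = emb p n a2 0 0 := Set.singleton_eq_singleton_iff.mp h
  exact congrFun h1 0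

lemma disj_AB [Fact p.Prime] : Disjoint (setA p n) (setB p n) := by
  rw [Set.disjoint_left]
  rintro S ⟨b, hb, rfl⟩ ⟨u, hu, hS⟩
  beta_reduce at hS
  have h1 : emb p n 0 0 b ∈ {w | w (lst n) = b} := emb_lst 0 0 b
  rw [← hS] at h1
  exact hb ((emb_lst 0 0 b).symm.trans h1.2)

lemma disj_ABC [Fact p.Prime] : Disjoint (setA p n ∪ setB p n) (setC p n) := by
  rw [Set.disjoint_left]
  rintro S (⟨b, hb, rfl⟩ | ⟨u, hu, rfl⟩) ⟨a, hS⟩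
  all_goals beta_reduce at hS
  · have h1 : emb p n 0 0 b ∈ {w | w (lst n) = b} := emb_lst 0 0 b
    rw [← hS, Set.mem_singleton_iff] at h1
    have := congrArg (fun w => w (lst n)) h1
    simp only [emb_lst] at this
    exact hb this
  · have h1 : emb p n a 0 0 ∈ ({emb p n a 0 0} : Set _) := rfl
    rw [hS] at h1
    exact hu (funext fun m => ((emb_mid a 0 0 m).symm.trans (h1.1 m)).symm)

end Hstmt

/-- The number of orbits of the Heisenberg group `G(p,n)` (the group of all
matrices `A(x,y,z)`) acting on `(ℤ/pℤ)^{n+2}` by matrix-vector multiplication equals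
`pⁿ + 2(p - 1)`.  Orbits are the sets `{A(x,y,z)·v : x, y, z}` for `v ∈ (ℤ/pℤ)^{n+2}`. -/
theorem stmt14 (p n : ℕ) [Fact p.Prime] (hn : 1 ≤ n) :
    Set.ncard
        {S : Set (Fin (n + 2) → ZMod p) |
          ∃ v : Fin (n + 2) → ZMod p,
            S = {w | ∃ (x y : Fin n → ZMod p) (z : ZMod p),
                      (heis p n x y z).mulVec v = w}}
      = p ^ n + 2 * (p - 1) := by
  haveI : NeZero p := ⟨(Fact.out : p.Prime).pos.ne'⟩
  have e : {S : Set (Fin (n + 2) → ZMod p) |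
          ∃ v : Fin (n + 2) → ZMod p,
            S = {w | ∃ (x y : Fin n → ZMod p) (z : ZMod p),
                      (heis p n x y z).mulVec v = w}}
      = {S | ∃ v, S = Hstmt.orb p n v} := rfl
  rw [e, Hstmt.classification,
    Set.ncard_union_eq Hstmt.disj_ABC (Set.toFinite _) (Set.toFinite _),
    Set.ncard_union_eq Hstmt.disj_AB (Set.toFinite _) (Set.toFinite _),
    Hstmt.ncard_setA, Hstmt.ncard_setB, Hstmt.ncard_setC]
  have hp2 : 2 ≤ p := (Fact.out : p.Prime).two_le
  have hpn : 1 ≤ p ^ n := Nat.one_le_pow _ _ (by omega)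
  omega
end

section
/- Let p be a prime, n ≥ 1, and c ∈ ℤ/pℤ with c ≠ 0. Let U be the complex vector space of all functions f : (ℤ/pℤ)ⁿ → ℂ, let ω = exp(2πi/p), and for x, y ∈ (ℤ/pℤ)ⁿ and z ∈ ℤ/pℤ define the operator T_{x,y,z} on U by (T_{x,y,z} f)(w) = ω^{c(y·w+z)} f(w + x), where the exponent is evaluated via the canonical representative in {0,…,p−1}. Then the only subspaces of U invariant under every operator T_{x,y,z} are {0} and U. -/
/-- `ω = exp(2πi/p)`, a primitive `p`-th root of unity. -/
noncomputable def heisOmega (p : ℕ) : ℂ := Complex.exp (2 * Real.pi * Complex.I / p)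

/-- The dot product `y · w = Σᵢ yᵢ wᵢ` in `ℤ/pℤ`. -/
def zdot {p n : ℕ} (y w : Fin n → ZMod p) : ZMod p := ∑ i, y i * w i

section aux
variable (p : ℕ) [Fact p.Prime]

lemma heisOmega_pow_p : heisOmega p ^ p = 1 := by
  have hp : (p : ℂ) ≠ 0 := Nat.cast_ne_zero.2 (Fact.out : p.Prime).ne_zero
  rw [heisOmega, ← Complex.exp_nat_mul, mul_div_cancel₀ _ hp, Complex.exp_two_pi_mul_I]

lemma heisOmega_pow_mod (k : ℕ) : heisOmega p ^ (k % p) = heisOmega p ^ k := by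
  conv_rhs => rw [← Nat.mod_add_div k p]
  rw [pow_add, pow_mul, heisOmega_pow_p, one_pow, mul_one]

lemma heisOmega_val_add (a b : ZMod p) :
    heisOmega p ^ (a + b).val = heisOmega p ^ a.val * heisOmega p ^ b.val := by
  haveI : NeZero p := ⟨(Fact.out : p.Prime).ne_zero⟩
  rw [ZMod.val_add, heisOmega_pow_mod, pow_add]

lemma heisOmega_val_ne_one (c : ZMod p) (hc : c ≠ 0) : heisOmega p ^ c.val ≠ 1 := by
  haveI : NeZero p := ⟨(Fact.out : p.Prime).ne_zero⟩
  intro h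
  rw [heisOmega, ← Complex.exp_nat_mul, Complex.exp_eq_one_iff] at h
  obtain ⟨k, hk⟩ := h
  have hp : (p : ℂ) ≠ 0 := Nat.cast_ne_zero.2 (Fact.out : p.Prime).ne_zero
  have h2 : (2 * (Real.pi:ℂ) * Complex.I) ≠ 0 := by
    simp [Real.pi_ne_zero, Complex.I_ne_zero, two_ne_zero]
  have hcp : (c.val : ℂ) = k * p := by
    field_simp at hk
    rw [ZMod.natCast_val]
    exact mul_right_cancel₀ h2 (by rw [← ZMod.natCast_val]; linear_combination (2 * (Real.pi:ℂ) * Complex.I) * hk)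
  have hzc : (c.val : ℤ) = k * p := by exact_mod_cast hcp
  have hdvd : p ∣ c.val := by
    have : (p:ℤ) ∣ (c.val : ℤ) := ⟨k, by linarith⟩
    exact_mod_cast this
  have h0 : c.val = 0 := Nat.eq_zero_of_dvd_of_lt hdvd (ZMod.val_lt c)
  exact hc (by rwa [← ZMod.val_eq_zero])
end aux

lemma zdot_sub {p n : ℕ} (y w w' : Fin n → ZMod p) :
    zdot y (w - w') = zdot y w - zdot y w' := by
  simp [zdot, mul_sub, Finset.sum_sub_distrib]

lemma zdot_add_left {p n : ℕ} (y e w : Fin n → ZMod p) :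
    zdot (y + e) w = zdot y w + zdot e w := by
  simp [zdot, add_mul, Finset.sum_add_distrib]

lemma zdot_zero_left {p n : ℕ} (w : Fin n → ZMod p) : zdot 0 w = 0 := by simp [zdot]

lemma zdot_zero_right {p n : ℕ} (y : Fin n → ZMod p) : zdot y 0 = 0 := by simp [zdot]

lemma char_sum (p : ℕ) [Fact p.Prime] (n : ℕ) (c : ZMod p) (hc : c ≠ 0)
    (v : Fin n → ZMod p) (hv : v ≠ 0) :
    ∑ y : Fin n → ZMod p, heisOmega p ^ (c * zdot y v).val = 0 := by
  obtain ⟨i, hi⟩ : ∃ i, v i ≠ 0 := by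
    by_contra h; push_neg at h; exact hv (funext h)
  set e : Fin n → ZMod p := Pi.single i (v i)⁻¹ with he
  have hev : zdot e v = 1 := by
    rw [zdot, Finset.sum_eq_single i]
    · simp [he, inv_mul_cancel₀ hi]
    · intro j _ hj; simp [he, Pi.single_eq_of_ne hj]
    · simp
  set S := ∑ y : Fin n → ZMod p, heisOmega p ^ (c * zdot y v).val with hSdef
  have key : S = heisOmega p ^ c.val * S := by
    calc S = ∑ y : Fin n → ZMod p, heisOmega p ^ (c * zdot (y + e) v).val :=
          (Fintype.sum_equiv (Equiv.addRight e) _ _ fun y => rfl).symm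
      _ = ∑ y : Fin n → ZMod p, heisOmega p ^ c.val * heisOmega p ^ (c * zdot y v).val := by
          refine Finset.sum_congr rfl fun y _ => ?_
          rw [zdot_add_left, hev, mul_add, mul_one, add_comm, heisOmega_val_add]
      _ = heisOmega p ^ c.val * S := by rw [hSdef, Finset.mul_sum]
  by_contra hS
  have h1 : heisOmega p ^ c.val * S = 1 * S := by rw [one_mul, ← key]
  exact heisOmega_val_ne_one p c hc (mul_right_cancel₀ hS h1)

/-- The operator `T_{x,y,z}` on `U = {f : (ℤ/pℤ)ⁿ → ℂ}`, given by
`(T_{x,y,z} f)(w) = ω^{c(y·w+z)} f(w + x)`, where the exponent is evaluated via the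
canonical representative in `{0, …, p-1}`.  These operators define the `pⁿ`-dimensional
irreducible representation `ρ_c` of the Heisenberg group `G(p,n)`. -/
noncomputable def heisT (p n : ℕ) (c : ZMod p) (x y : Fin n → ZMod p) (z : ZMod p) :
    ((Fin n → ZMod p) → ℂ) →ₗ[ℂ] ((Fin n → ZMod p) → ℂ) where
  toFun f := fun w => heisOmega p ^ (c * (zdot y w + z)).val * f (w + x)
  map_add' f g := by funext w; simp [mul_add]
  map_smul' a f := by funext w; simp [Pi.smul_apply, smul_eq_mul]; ring

lemma heisT_apply (p n : ℕ) (c : ZMod p) (x y : Fin n → ZMod p) (z : ZMod p)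
    (f : (Fin n → ZMod p) → ℂ) (w : Fin n → ZMod p) :
    heisT p n c x y z f w = heisOmega p ^ (c * (zdot y w + z)).val * f (w + x) := rfl

/-- For `p` prime, `n ≥ 1` and `c ≠ 0` in `ℤ/pℤ`, the only subspaces of
`U = {f : (ℤ/pℤ)ⁿ → ℂ}` invariant under all the operators `T_{x,y,z}` are `{0}` and `U`
(i.e. the representation `ρ_c` is irreducible). -/
theorem stmt15 (p : ℕ) [Fact p.Prime] (n : ℕ) (hn : 1 ≤ n) (c : ZMod p) (hc : c ≠ 0) :
    ∀ S : Submodule ℂ ((Fin n → ZMod p) → ℂ),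
      (∀ (x y : Fin n → ZMod p) (z : ZMod p), ∀ f ∈ S, heisT p n c x y z f ∈ S) →
      S = ⊥ ∨ S = ⊤ := by
  haveI : NeZero p := ⟨(Fact.out : p.Prime).ne_zero⟩
  intro S hS
  by_cases hbot : S = ⊥
  · exact Or.inl hbot
  right
  rw [Submodule.eq_bot_iff] at hbot
  push_neg at hbot
  obtain ⟨f, hfS, hf0⟩ := hbot
  obtain ⟨w₀, hw₀⟩ : ∃ w, f w ≠ 0 := by
    by_contra h; push_neg at h; exact hf0 (funext h)
  set N : ℂ := (Fintype.card (Fin n → ZMod p) : ℂ) with hN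
  have hNne : N ≠ 0 := Nat.cast_ne_zero.2 Fintype.card_ne_zero
  set g : (Fin n → ZMod p) → ℂ :=
    ∑ y : Fin n → ZMod p, heisOmega p ^ (-(c * zdot y w₀)).val • heisT p n c 0 y 0 f with hg
  have hgS : g ∈ S := Submodule.sum_mem _ fun y _ => Submodule.smul_mem _ _ (hS 0 y 0 f hfS)
  have hgval : g = (N * f w₀) • (Pi.single w₀ (1:ℂ) : (Fin n → ZMod p) → ℂ) := by
    funext w
    have h1 : g w = (∑ y : Fin n → ZMod p, heisOmega p ^ (c * zdot y (w - w₀)).val) * f w := by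
      rw [hg, Finset.sum_apply, Finset.sum_mul]
      refine Finset.sum_congr rfl fun y _ => ?_
      have e1 : -(c * zdot y w₀) + c * (zdot y w + 0) = c * zdot y (w - w₀) := by
        rw [zdot_sub]; ring
      rw [Pi.smul_apply, smul_eq_mul, heisT_apply, ← mul_assoc, ← heisOmega_val_add, e1,
        add_zero]
    by_cases hw : w = w₀
    · subst hw
      simp only [sub_self, zdot_zero_right, mul_zero, ZMod.val_zero, pow_zero,
        Finset.sum_const, Finset.card_univ, nsmul_eq_mul, mul_one] at h1
      rw [h1]
      simp [Pi.single_apply, hN]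
    · rw [h1, char_sum p n c hc (w - w₀) (sub_ne_zero.2 hw), zero_mul]
      simp [Pi.single_apply, hw]
  have hδ : Pi.single w₀ (1:ℂ) ∈ S := by
    have h2 : (Pi.single w₀ (1:ℂ) : (Fin n → ZMod p) → ℂ) = (N * f w₀)⁻¹ • g := by
      rw [hgval, smul_smul, inv_mul_cancel₀ (mul_ne_zero hNne hw₀), one_smul]
    rw [h2]; exact Submodule.smul_mem _ _ hgS
  have hδu : ∀ u : Fin n → ZMod p, Pi.single u (1:ℂ) ∈ S := by
    intro u
    have hiff : ∀ w : Fin n → ZMod p, w + (w₀ - u) = w₀ ↔ w = u := by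
      intro w
      constructor
      · intro h
        have h3 : w - u = 0 := by linear_combination h
        exact sub_eq_zero.mp h3
      · rintro rfl; ring
    have h4 : heisT p n c (w₀ - u) 0 0 (Pi.single w₀ (1:ℂ)) = Pi.single u (1:ℂ) := by
      funext w
      rw [heisT_apply]
      simp [zdot_zero_left, Pi.single_apply, hiff w]
    rw [← h4]
    exact hS _ _ _ _ hδ
  rw [Submodule.eq_top_iff']
  intro h
  have h5 : h = ∑ u : Fin n → ZMod p, h u • (Pi.single u (1:ℂ) : (Fin n → ZMod p) → ℂ) := by
    funext w
    simp [Finset.sum_apply, Pi.single_apply]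
  rw [h5]
  exact Submodule.sum_mem _ fun u _ => Submodule.smul_mem _ _ (hδu u)
end

section
/- Let p be a prime and n ≥ 1, and let the Heisenberg group G(p,n) of matrices A(x,y,z) act on (ℤ/pℤ)^{n+2} by matrix-vector multiplication. Then: (1) there exist vectors v₁, …, v_{n+1} ∈ (ℤ/pℤ)^{n+2} such that the only (x,y,z) with A(x,y,z)·vⱼ = vⱼ for all j = 1,…,n+1 is (x,y,z) = (0,0,0); and (2) for any vectors v₁, …, vₙ ∈ (ℤ/pℤ)^{n+2} there exists (x,y,z) ≠ (0,0,0) with A(x,y,z)·vⱼ = vⱼ for all j = 1,…,n. In other words, the minimal base size of this permutation action is n+1. -/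
variable {p n : ℕ}

/-- the middle index k+1 in Fin (n+2) -/
def emb (k : Fin n) : Fin (n + 2) := k.castSucc.succ

lemma emb_val (k : Fin n) : (emb k).val = k.val + 1 := rfl

lemma sum_split (f : Fin (n + 2) → ZMod p) :
    ∑ j, f j = f 0 + ((∑ k : Fin n, f (emb k)) + f (Fin.last (n + 1))) := by
  rw [Fin.sum_univ_succ, Fin.sum_univ_castSucc]
  rfl

lemma heis_entry_00 (x y : Fin n → ZMod p) (z : ZMod p) :
    heis p n x y z 0 0 = 1 := by simp [heis]

lemma heis_entry_0emb (x y : Fin n → ZMod p) (z : ZMod p) (k : Fin n) :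
    heis p n x y z 0 (emb k) = x k := by
  have h1 : (0 : Fin (n+2)) ≠ emb k := by
    simp [Fin.ext_iff, emb_val]
  have h2 : (emb k).val ≠ n + 1 := by
    have := k.isLt; simp [emb_val]; omega
  simp [heis, h1, h2, emb_val, Fin.is_lt]
  intro hh; exact absurd hh (by have := k.isLt; omega)

lemma heis_entry_0last (x y : Fin n → ZMod p) (z : ZMod p) :
    heis p n x y z 0 (Fin.last (n+1)) = z := by
  have h1 : (0 : Fin (n+2)) ≠ Fin.last (n+1) := by simp [Fin.ext_iff]
  simp [heis, h1, Fin.last]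

lemma heis_entry_emb0 (x y : Fin n → ZMod p) (z : ZMod p) (k : Fin n) :
    heis p n x y z (emb k) 0 = 0 := by
  have h1 : emb k ≠ (0 : Fin (n+2)) := by simp [Fin.ext_iff, emb_val]
  simp [heis, h1, emb_val]

lemma heis_entry_embemb (x y : Fin n → ZMod p) (z : ZMod p) (k m : Fin n) :
    heis p n x y z (emb k) (emb m) = if k = m then 1 else 0 := by
  by_cases h : k = m
  · simp [heis, h]
  · have h1 : emb k ≠ emb m := by
      simp [Fin.ext_iff, emb_val]; exact fun hh => h (Fin.ext hh)
    have h2 : (emb m).val ≠ n + 1 := by have := m.isLt; simp [emb_val]; omega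
    simp [heis, h1, h2, emb_val, h]
    have h3 : emb k ≠ 0 := by simp [Fin.ext_iff, emb_val]
    have h4 : (m : ℕ) ≠ n := by have := m.isLt; omega
    simp [h3, h4]

lemma heis_entry_emblast (x y : Fin n → ZMod p) (z : ZMod p) (k : Fin n) :
    heis p n x y z (emb k) (Fin.last (n+1)) = y k := by
  have h1 : emb k ≠ Fin.last (n+1) := by
    have := k.isLt; simp [Fin.ext_iff, emb_val, Fin.last]; omega
  simp [heis, h1, emb_val, Fin.last, Fin.is_lt]
  rw [if_neg (by exact h1), if_neg (by simp [Fin.ext_iff, emb_val])]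

lemma heis_entry_last (x y : Fin n → ZMod p) (z : ZMod p) (j : Fin (n+2)) :
    heis p n x y z (Fin.last (n+1)) j = if Fin.last (n+1) = j then 1 else 0 := by
  by_cases h : Fin.last (n+1) = j
  · simp [heis, h]
  · simp [heis, h, Fin.last]

lemma row0 (x y : Fin n → ZMod p) (z : ZMod p) (v : Fin (n+2) → ZMod p) :
    (heis p n x y z).mulVec v 0
      = v 0 + ((∑ k : Fin n, x k * v (emb k)) + z * v (Fin.last (n+1))) := by
  rw [Matrix.mulVec, dotProduct, sum_split]
  simp [heis_entry_00, heis_entry_0emb, heis_entry_0last]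

lemma rowmid (x y : Fin n → ZMod p) (z : ZMod p) (v : Fin (n+2) → ZMod p) (k : Fin n) :
    (heis p n x y z).mulVec v (emb k)
      = v (emb k) + y k * v (Fin.last (n+1)) := by
  rw [Matrix.mulVec, dotProduct, sum_split]
  simp [heis_entry_emb0, heis_entry_embemb, heis_entry_emblast,
    Finset.sum_ite_eq, Finset.mem_univ, ite_mul, zero_mul]

lemma rowlast (x y : Fin n → ZMod p) (z : ZMod p) (v : Fin (n+2) → ZMod p) :
    (heis p n x y z).mulVec v (Fin.last (n+1)) = v (Fin.last (n+1)) := by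
  rw [Matrix.mulVec, dotProduct]
  simp [heis_entry_last, ite_mul, zero_mul]

lemma fix_iff (x y : Fin n → ZMod p) (z : ZMod p) (v : Fin (n+2) → ZMod p) :
    (heis p n x y z).mulVec v = v ↔
      ((∑ k : Fin n, x k * v (emb k)) + z * v (Fin.last (n+1)) = 0 ∧
       ∀ k : Fin n, y k * v (Fin.last (n+1)) = 0) := by
  constructor
  · intro h
    constructor
    · have h0 := congrFun h 0
      rw [row0] at h0
      exact (add_eq_left).1 h0
    · intro k
      have hk := congrFun h (emb k)
      rw [rowmid] at hk
      exact (add_eq_left).1 hk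
  · rintro ⟨h1, h2⟩
    funext i
    induction i using Fin.cases with
    | zero => rw [row0, h1, add_zero]
    | succ j =>
      induction j using Fin.lastCases with
      | last => rw [Fin.succ_last, rowlast]
      | cast k =>
        show (heis p n x y z).mulVec v (emb k) = v (emb k)
        rw [rowmid, h2 k, add_zero]


/-- For the action of the Heisenberg group `G(p,n)` on `(ℤ/pℤ)^{n+2}`:
(1) there are `n+1` vectors whose common stabilizer is trivial (a base of size `n+1`), and
(2) no `n` vectors have trivial common stabilizer.  Hence the minimal base size — the
classical query complexity of identifying a hidden group element — is `n+1`. -/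
theorem stmt17 (p n : ℕ) [Fact p.Prime] (hn : 1 ≤ n) :
    (∃ v : Fin (n + 1) → (Fin (n + 2) → ZMod p),
      ∀ (x y : Fin n → ZMod p) (z : ZMod p),
        (∀ j : Fin (n + 1), (heis p n x y z).mulVec (v j) = v j) →
        x = 0 ∧ y = 0 ∧ z = 0) ∧
    (∀ v : Fin n → (Fin (n + 2) → ZMod p),
      ∃ (x y : Fin n → ZMod p) (z : ZMod p),
        ¬(x = 0 ∧ y = 0 ∧ z = 0) ∧
        ∀ j : Fin n, (heis p n x y z).mulVec (v j) = v j) := by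
  constructor
  · -- part 1
    refine ⟨fun j => if h : j.val < n then Pi.single (emb ⟨j.val, h⟩) 1
      else Pi.single (Fin.last (n+1)) 1, ?_⟩
    intro x y z h
    have hemb_ne_last : ∀ k : Fin n, emb k ≠ Fin.last (n+1) := by
      intro k hk
      have := congrArg Fin.val hk
      have := k.isLt
      simp [emb_val, Fin.last] at *
      omega
    have hlast := h (Fin.last n)
    rw [fix_iff] at hlast
    simp only [Fin.val_last, lt_self_iff_false, dite_false] at hlast
    obtain ⟨hz', hy'⟩ := hlast
    have hsingle_last : Pi.single (M := fun _ : Fin (n+2) => ZMod p) (Fin.last (n+1)) 1 (Fin.last (n+1)) = 1 := by simp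
    have hzero : z = 0 := by
      have : (∑ k : Fin n, x k * Pi.single (M := fun _ : Fin (n+2) => ZMod p) (Fin.last (n+1)) 1 (emb k)) = 0 := by
        apply Finset.sum_eq_zero
        intro k _
        rw [Pi.single_apply, if_neg (hemb_ne_last k)]
        ring
      rw [this, zero_add, hsingle_last, mul_one] at hz'
      exact hz'
    have hy : y = 0 := by
      funext k
      have := hy' k
      rw [hsingle_last, mul_one] at this
      simpa using this
    have hx : x = 0 := by
      funext k
      have hk := h k.castSucc
      rw [fix_iff] at hk
      have hkv : (k.castSucc : Fin (n+1)).val < n := k.isLt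
      simp only [Fin.coe_castSucc, dif_pos k.isLt, Fin.eta] at hk
      obtain ⟨hx', _⟩ := hk
      have hsum : (∑ m : Fin n, x m * Pi.single (M := fun _ : Fin (n+2) => ZMod p) (emb k) 1 (emb m)) = x k := by
        rw [Finset.sum_eq_single k]
        · simp
        · intro m _ hm
          rw [Pi.single_apply, if_neg, mul_zero]
          intro hme
          apply hm
          have hv := congrArg Fin.val hme
          simp only [emb_val] at hv
          exact Fin.ext (by omega)
        · simp
      rw [hsum, hzero, zero_mul, add_zero] at hx'
      simpa using hx'
    exact ⟨hx, hy, hzero⟩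
  · -- part 2
    intro v
    set M : Matrix (Fin n) (Fin (n+1)) (ZMod p) :=
      Matrix.of fun j l => Fin.lastCases (v j (Fin.last (n+1))) (fun k => v j (emb k)) l with hM
    have hp : 1 < p := (Fact.out : p.Prime).one_lt
    have hcard : Fintype.card (Fin n → ZMod p) < Fintype.card (Fin (n+1) → ZMod p) := by
      simp only [Fintype.card_fun, Fintype.card_fin, ZMod.card]
      exact Nat.pow_lt_pow_succ hp
    obtain ⟨a, b, hab, hfab⟩ := Fintype.exists_ne_map_eq_of_card_lt (fun w => M.mulVec w) hcard
    set w := a - b with hw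
    have hw0 : w ≠ 0 := sub_ne_zero.2 hab
    have hMw : M.mulVec w = 0 := by
      rw [hw, Matrix.mulVec_sub, hfab, sub_self]
    refine ⟨fun k => w k.castSucc, 0, w (Fin.last n), ?_, ?_⟩
    · rintro ⟨hx, -, hz⟩
      apply hw0
      funext l
      induction l using Fin.lastCases with
      | last => exact hz
      | cast k => exact congrFun hx k
    · intro j
      rw [fix_iff]
      refine ⟨?_, fun k => by simp⟩
      have := congrFun hMw j
      rw [Matrix.mulVec, dotProduct, Fin.sum_univ_castSucc] at this
      rw [Pi.zero_apply] at this
      simp only [hM, Matrix.of_apply, Fin.lastCases_castSucc, Fin.lastCases_last] at this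
      rw [← this]
      congr 1
      · apply Finset.sum_congr rfl
        intro k _
        ring
      · ring
end

section
/- Let A be a finite nonempty type, and let k, t be natural numbers with 1 ≤ k and t < k. For a function χ : {1,…,k} → A, let S(χ) = {ψ ∈ A : #{i : χ(i) = ψ} ≥ k − t}. Then: (1) for every χ, |S(χ)| · (k − t) ≤ k, so |S(χ)| ≤ ⌊k/(k−t)⌋; and (2) the maximum over all χ of |S(χ)| equals min(|A|, ⌊k/(k−t)⌋). -/
/-- Let `A` be a finite nonempty type and `1 ≤ k`, `t < k`.  For
`χ : {1,…,k} → A` let `S(χ)` be the set of `ψ ∈ A` attained by `χ` at least `k - t` times.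
Then (1) `|S(χ)|·(k-t) ≤ k`, so `|S(χ)| ≤ ⌊k/(k-t)⌋`, for every `χ`; and (2) the maximum of
`|S(χ)|` over all `χ` equals `min(|A|, ⌊k/(k-t)⌋)`. -/
theorem stmt18 (A : Type) [Fintype A] [Nonempty A] [DecidableEq A]
    (k t : ℕ) (hk : 1 ≤ k) (ht : t < k) :
    (∀ χ : Fin k → A,
      (Finset.univ.filter (fun ψ : A =>
          k - t ≤ (Finset.univ.filter (fun i : Fin k => χ i = ψ)).card)).card * (k - t) ≤ k ∧
      (Finset.univ.filter (fun ψ : A =>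
          k - t ≤ (Finset.univ.filter (fun i : Fin k => χ i = ψ)).card)).card ≤ k / (k - t)) ∧
    Finset.univ.sup (fun χ : Fin k → A =>
        (Finset.univ.filter (fun ψ : A =>
          k - t ≤ (Finset.univ.filter (fun i : Fin k => χ i = ψ)).card)).card)
      = min (Fintype.card A) (k / (k - t)) := by
  have hpos : 0 < k - t := Nat.sub_pos_of_lt ht
  have part1 : ∀ χ : Fin k → A,
      (Finset.univ.filter (fun ψ : A =>
          k - t ≤ (Finset.univ.filter (fun i : Fin k => χ i = ψ)).card)).card * (k - t) ≤ k := by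
    intro χ
    set S := Finset.univ.filter (fun ψ : A =>
        k - t ≤ (Finset.univ.filter (fun i : Fin k => χ i = ψ)).card) with hS
    calc S.card * (k - t) = ∑ ψ ∈ S, (k - t) := by
          rw [Finset.sum_const, smul_eq_mul]
      _ ≤ ∑ ψ ∈ S, (Finset.univ.filter (fun i : Fin k => χ i = ψ)).card := by
          apply Finset.sum_le_sum
          intro ψ hψ
          exact (Finset.mem_filter.mp hψ).2
      _ ≤ ∑ ψ ∈ (Finset.univ : Finset A),
            (Finset.univ.filter (fun i : Fin k => χ i = ψ)).card :=
          Finset.sum_le_sum_of_subset (Finset.filter_subset _ _)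
      _ = k := by
          rw [← Finset.card_eq_sum_card_fiberwise (fun i _ => Finset.mem_univ (χ i))]
          simp
  constructor
  · intro χ
    refine ⟨part1 χ, ?_⟩
    rw [Nat.le_div_iff_mul_le hpos]
    exact part1 χ
  · set m := min (Fintype.card A) (k / (k - t)) with hm
    have hm1 : 1 ≤ m := le_min Fintype.card_pos
      ((Nat.one_le_div_iff hpos).mpr (Nat.sub_le k t))
    have hmA : m ≤ Fintype.card A := min_le_left _ _
    have hmk : m ≤ k / (k - t) := min_le_right _ _
    have hmkt : m * (k - t) ≤ k :=
      le_trans (Nat.mul_le_mul_right _ hmk) (Nat.div_mul_le_self k (k - t))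
    apply le_antisymm
    · apply Finset.sup_le
      intro χ _
      refine le_min ?_ ?_
      · calc _ ≤ (Finset.univ : Finset A).card := Finset.card_filter_le _ _
          _ = Fintype.card A := Finset.card_univ
      · rw [Nat.le_div_iff_mul_le hpos]; exact part1 χ
    · -- construct χ attaining m
      set F : ℕ → A := fun j =>
        (Fintype.equivFin A).symm ⟨j % Fintype.card A, Nat.mod_lt _ Fintype.card_pos⟩ with hF
      have hFinj : ∀ a ∈ Finset.range m, ∀ b ∈ Finset.range m, F a = F b → a = b := by
        intro a ha b hb hab
        simp only [Finset.mem_range] at ha hb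
        have : (⟨a % Fintype.card A, Nat.mod_lt _ Fintype.card_pos⟩ : Fin (Fintype.card A))
            = ⟨b % Fintype.card A, Nat.mod_lt _ Fintype.card_pos⟩ :=
          (Fintype.equivFin A).symm.injective hab
        have := Fin.mk.inj_iff.mp this
        rwa [Nat.mod_eq_of_lt (lt_of_lt_of_le ha hmA),
          Nat.mod_eq_of_lt (lt_of_lt_of_le hb hmA)] at this
      set χ : Fin k → A := fun i => F (min (i.val / (k - t)) (m - 1)) with hχ
      have key : ∀ j ∈ Finset.range m,
          k - t ≤ (Finset.univ.filter (fun i : Fin k => χ i = F j)).card := by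
        intro j hj
        rw [Finset.mem_range] at hj
        have hlt : ∀ a : Fin (k - t), (k - t) * j + a.val < k := by
          intro a
          calc (k - t) * j + a.val < (k - t) * j + (k - t) := by
                exact Nat.add_lt_add_left a.isLt _
            _ = (k - t) * (j + 1) := by ring
            _ ≤ (k - t) * m := Nat.mul_le_mul_left _ hj
            _ = m * (k - t) := Nat.mul_comm _ _
            _ ≤ k := hmkt
        have := Finset.card_le_card_of_injOn
          (f := fun a : Fin (k - t) => (⟨(k - t) * j + a.val, hlt a⟩ : Fin k))
          (s := Finset.univ) (t := Finset.univ.filter (fun i : Fin k => χ i = F j))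
          (by
            intro a _
            simp only [Finset.mem_coe, Finset.mem_filter, Finset.mem_univ, true_and, hχ]
            congr 1
            have hdiv : ((k - t) * j + a.val) / (k - t) = j := by
              rw [Nat.mul_add_div hpos, Nat.div_eq_of_lt a.isLt, Nat.add_zero]
            rw [hdiv, min_eq_left (Nat.le_sub_one_of_lt hj)])
          (by
            intro a _ b _ hab
            have : (k - t) * j + a.val = (k - t) * j + b.val := Fin.mk.inj_iff.mp hab
            exact Fin.val_injective (Nat.add_left_cancel this))
        simpa using this
      have hcard : m ≤ (Finset.univ.filter (fun ψ : A =>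
          k - t ≤ (Finset.univ.filter (fun i : Fin k => χ i = ψ)).card)).card := by
        have := Finset.card_le_card_of_injOn (f := F) (s := Finset.range m)
          (t := Finset.univ.filter (fun ψ : A =>
            k - t ≤ (Finset.univ.filter (fun i : Fin k => χ i = ψ)).card))
          (by
            intro j hj
            simp only [Finset.mem_coe, Finset.mem_filter, Finset.mem_univ, true_and]
            exact key j hj)
          hFinj
        simpa using this
      exact le_trans hcard (Finset.le_sup (f := fun χ : Fin k → A =>
        (Finset.univ.filter (fun ψ : A =>
          k - t ≤ (Finset.univ.filter (fun i : Fin k => χ i = ψ)).card)).card)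
        (Finset.mem_univ χ))
end

section
/- Let p be a prime and n ≥ 1, let ω = exp(2πi/p), and for x, y ∈ (ℤ/pℤ)ⁿ and z ∈ ℤ/pℤ let N(x,y,z) denote the number of vectors v ∈ (ℤ/pℤ)^{n+2} fixed by the Heisenberg matrix A(x,y,z). Then for α, β ∈ (ℤ/pℤ)ⁿ, the sum Σ over all x, y ∈ (ℤ/pℤ)ⁿ and z ∈ ℤ/pℤ of N(x,y,z)·ω^{−(α·x+β·y)} equals: (pⁿ + 2(p−1))·p^{2n+1} if α = 0 and β = 0; (p−1)·p^{2n+1} if exactly one of α, β is zero; and 0 if α ≠ 0 and β ≠ 0. -/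
/-! ### Auxiliary machinery -/

noncomputable def hpsi (p : ℕ) [NeZero p] : AddChar (ZMod p) ℂ :=
  AddChar.zmodChar p ((Complex.isPrimitiveRoot_exp p (NeZero.ne p)).pow_eq_one)

lemma hpsi_apply (p : ℕ) [NeZero p] (a : ZMod p) : hpsi p a = heisOmega p ^ a.val := rfl

lemma sum_hpsi_mul (p : ℕ) [NeZero p] (a : ZMod p) :
    ∑ z : ZMod p, hpsi p (z * a) = if a = 0 then (p : ℂ) else 0 := by
  unfold hpsi
  rw [AddChar.sum_mulShift a
    (AddChar.zmodChar_primitive_of_primitive_root p (Complex.isPrimitiveRoot_exp p (NeZero.ne p)))]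
  simp [ZMod.card]

lemma hpsi_sum (p : ℕ) [NeZero p] {ι : Type*} (s : Finset ι) (f : ι → ZMod p) :
    hpsi p (∑ i ∈ s, f i) = ∏ i ∈ s, hpsi p (f i) := by
  induction s using Finset.cons_induction with
  | empty => simp
  | cons a s ha ih => rw [Finset.sum_cons, Finset.prod_cons, AddChar.map_add_eq_mul, ih]

lemma sum_hpsi_dot (p n : ℕ) [NeZero p] (γ : Fin n → ZMod p) :
    ∑ x : Fin n → ZMod p, hpsi p (zdot γ x) = if γ = 0 then (p : ℂ) ^ n else 0 := by
  have h1 : ∀ x : Fin n → ZMod p, hpsi p (zdot γ x) = ∏ i, hpsi p (x i * γ i) := by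
    intro x
    rw [zdot, hpsi_sum]
    exact Finset.prod_congr rfl fun i _ => by rw [mul_comm]
  simp_rw [h1]
  rw [← Fintype.piFinset_univ, ← Finset.prod_univ_sum (fun _ => Finset.univ)
      (fun i t => hpsi p (t * γ i))]
  simp_rw [sum_hpsi_mul p]
  by_cases hγ : γ = 0
  · simp [hγ]
  · rw [if_neg hγ]
    obtain ⟨i, hi⟩ := Function.ne_iff.mp hγ
    have hi' : γ i ≠ 0 := hi
    exact Finset.prod_eq_zero (Finset.mem_univ i) (by simp [hi'])

/-- The character `x ↦ ω^{-γ·x}`. -/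
noncomputable def hchi (p n : ℕ) [NeZero p] (γ u : Fin n → ZMod p) : ℂ :=
  hpsi p (-(zdot γ u))

lemma hchi_eq (p n : ℕ) [NeZero p] (γ u : Fin n → ZMod p) :
    hchi p n γ u = hpsi p (zdot (-γ) u) := by
  unfold hchi
  congr 1
  simp [zdot, Finset.sum_neg_distrib]

lemma sum_hchi (p n : ℕ) [NeZero p] (γ : Fin n → ZMod p) :
    ∑ u : Fin n → ZMod p, hchi p n γ u = if γ = 0 then (p : ℂ) ^ n else 0 := by
  simp_rw [hchi_eq]
  rw [sum_hpsi_dot]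
  simp

lemma hchi_zero_right (p n : ℕ) [NeZero p] (γ : Fin n → ZMod p) :
    hchi p n γ 0 = 1 := by
  have : zdot γ (0 : Fin n → ZMod p) = 0 := by simp [zdot]
  unfold hchi
  rw [this, neg_zero, AddChar.map_zero_eq_one]

section Structure

variable {p n : ℕ}

abbrev midIdx {n : ℕ} (i : Fin n) : Fin (n + 2) := i.castSucc.succ
abbrev lastIdx (n : ℕ) : Fin (n + 2) := Fin.last (n + 1)

variable (x y : Fin n → ZMod p) (z : ZMod p)

lemma heis_00 : heis p n x y z 0 0 = 1 := by simp [heis]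

lemma heis_0_mid (i : Fin n) : heis p n x y z 0 (midIdx i) = x i := by
  have hi := i.isLt
  simp only [heis, Matrix.of_apply]
  rw [if_neg (by simp [Fin.ext_iff] <;> omega), if_neg (by simp [Fin.ext_iff] <;> omega),
    dif_pos ⟨rfl, by simp [Fin.ext_iff] <;> omega⟩]
  exact congrArg x (Fin.ext (by simp))

lemma heis_0_last : heis p n x y z 0 (lastIdx n) = z := by
  simp only [heis, Matrix.of_apply, Fin.ext_iff, Fin.val_last, Fin.val_zero]
  rw [if_neg (by omega), if_pos ⟨trivial, trivial⟩]

lemma heis_mid_0 (k : Fin n) : heis p n x y z (midIdx k) 0 = 0 := by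
  have hk := k.isLt
  simp only [heis, Matrix.of_apply]
  rw [if_neg (by simp [Fin.ext_iff] <;> omega), if_neg (by simp [Fin.ext_iff] <;> omega),
    dif_neg (by simp [Fin.ext_iff] <;> omega), dif_neg (by simp [Fin.ext_iff] <;> omega)]

lemma heis_mid_mid (k i : Fin n) :
    heis p n x y z (midIdx k) (midIdx i) = if k = i then 1 else 0 := by
  have hk := k.isLt; have hi := i.isLt
  simp only [heis, Matrix.of_apply, Fin.ext_iff, Fin.val_succ, Fin.coe_castSucc]
  by_cases h : (k : ℕ) = (i : ℕ)
  · rw [if_pos (by omega), if_pos h]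
  · rw [if_neg (by omega), if_neg (by omega), dif_neg (by omega), dif_neg (by omega),
      if_neg h]

lemma heis_mid_last (k : Fin n) : heis p n x y z (midIdx k) (lastIdx n) = y k := by
  have hk := k.isLt
  simp only [heis, Matrix.of_apply, Fin.ext_iff, Fin.val_succ, Fin.coe_castSucc, Fin.val_last]
  rw [if_neg (by omega), if_neg (by omega), dif_neg (by omega), dif_pos ⟨trivial, by omega⟩]
  exact congrArg y (Fin.ext (by simp))

lemma heis_last_0 : heis p n x y z (lastIdx n) 0 = 0 := by
  simp only [heis, Matrix.of_apply]
  rw [if_neg (by simp [Fin.ext_iff] <;> omega), if_neg (by simp [Fin.ext_iff] <;> omega),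
    dif_neg (by simp [Fin.ext_iff] <;> omega), dif_neg (by simp [Fin.ext_iff] <;> omega)]

lemma heis_last_mid (i : Fin n) : heis p n x y z (lastIdx n) (midIdx i) = 0 := by
  have hi := i.isLt
  simp only [heis, Matrix.of_apply, Fin.ext_iff, Fin.val_last, Fin.val_succ, Fin.coe_castSucc]
  rw [if_neg (by omega), if_neg (by omega), dif_neg (by omega), dif_neg (by omega)]

lemma heis_last_last : heis p n x y z (lastIdx n) (lastIdx n) = 1 := by simp [heis]

lemma sum_fin_split {M : Type*} [AddCommMonoid M] (g : Fin (n + 2) → M) :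
    ∑ j, g j = g 0 + ((∑ i : Fin n, g (midIdx i)) + g (lastIdx n)) := by
  rw [Fin.sum_univ_succ, Fin.sum_univ_castSucc]
  rfl

lemma heis_fixed_iff (v : Fin (n + 2) → ZMod p) :
    (heis p n x y z).mulVec v = v ↔
      (zdot x (fun i => v (midIdx i)) + z * v (lastIdx n) = 0 ∧
        ∀ i : Fin n, y i * v (lastIdx n) = 0) := by
  have hrow : ∀ i, (heis p n x y z).mulVec v i = ∑ j, heis p n x y z i j * v j :=
    fun i => rfl
  have h0 : (heis p n x y z).mulVec v 0
      = v 0 + ((zdot x fun i => v (midIdx i)) + z * v (lastIdx n)) := by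
    rw [hrow, sum_fin_split]
    rw [heis_00, heis_0_last, one_mul, zdot]
    congr 2
    exact Finset.sum_congr rfl fun i _ => by rw [heis_0_mid]
  have hmid : ∀ k : Fin n, (heis p n x y z).mulVec v (midIdx k)
      = v (midIdx k) + y k * v (lastIdx n) := by
    intro k
    rw [hrow, sum_fin_split, heis_mid_0, heis_mid_last, zero_mul, zero_add]
    congr 1
    · rw [Finset.sum_congr rfl fun i _ => by rw [heis_mid_mid]]
      simp [ite_mul]
  have hlast : (heis p n x y z).mulVec v (lastIdx n) = v (lastIdx n) := by
    rw [hrow, sum_fin_split, heis_last_0, heis_last_last, zero_mul, zero_add, one_mul]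
    rw [Finset.sum_congr rfl fun i _ => by rw [heis_last_mid]]
    simp
  constructor
  · intro h
    constructor
    · have := congrFun h 0
      rw [h0] at this
      exact (add_eq_left).mp this
    · intro k
      have := congrFun h (midIdx k)
      rw [hmid k] at this
      exact (add_eq_left).mp this
  · rintro ⟨h1, h2⟩
    funext j
    refine Fin.cases ?_ (fun k => ?_) j
    · rw [h0, h1, add_zero]
    · refine Fin.lastCases ?_ (fun i => ?_) k
      · exact hlast
      · rw [hmid i, h2 i, add_zero]

def vecEquiv (p n : ℕ) : (ZMod p × (Fin n → ZMod p) × ZMod p) ≃ (Fin (n + 2) → ZMod p) where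
  toFun q := Fin.cons q.1 (Fin.snoc q.2.1 q.2.2)
  invFun v := (v 0, fun i => v (midIdx i), v (lastIdx n))
  left_inv q := by
    obtain ⟨a, w, t⟩ := q
    refine Prod.ext ?_ (Prod.ext ?_ ?_)
    · simp
    · funext i
      change (Fin.cons a (Fin.snoc w t) : Fin (n+2) → ZMod p) (Fin.succ i.castSucc) = w i
      rw [Fin.cons_succ, Fin.snoc_castSucc]
    · change (Fin.cons a (Fin.snoc w t) : Fin (n+2) → ZMod p) (Fin.last (n+1)) = t
      rw [← Fin.succ_last, Fin.cons_succ, Fin.snoc_last]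
  right_inv v := by
    funext j
    refine Fin.cases ?_ (fun k => ?_) j
    · simp
    · refine Fin.lastCases ?_ (fun i => ?_) k
      · change (Fin.cons (v 0) (Fin.snoc (fun i => v (midIdx i)) (v (lastIdx n)))
            : Fin (n+2) → ZMod p) (Fin.succ (Fin.last n)) = v (Fin.last n).succ
        rw [Fin.cons_succ, Fin.snoc_last]
        rw [Fin.succ_last]
      · change (Fin.cons (v 0) (Fin.snoc (fun i => v (midIdx i)) (v (lastIdx n)))
            : Fin (n+2) → ZMod p) (Fin.succ i.castSucc) = v i.castSucc.succ
        rw [Fin.cons_succ, Fin.snoc_castSucc]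

lemma vecEquiv_mid (a : ZMod p) (w : Fin n → ZMod p) (t : ZMod p) (i : Fin n) :
    vecEquiv p n (a, w, t) (midIdx i) = w i := by
  change (Fin.cons a (Fin.snoc w t) : Fin (n+2) → ZMod p) (Fin.succ i.castSucc) = w i
  rw [Fin.cons_succ, Fin.snoc_castSucc]

lemma vecEquiv_last (a : ZMod p) (w : Fin n → ZMod p) (t : ZMod p) :
    vecEquiv p n (a, w, t) (lastIdx n) = t := by
  change (Fin.cons a (Fin.snoc w t) : Fin (n+2) → ZMod p) (Fin.last (n+1)) = t
  rw [← Fin.succ_last, Fin.cons_succ, Fin.snoc_last]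

lemma card_fixed [NeZero p] (x y : Fin n → ZMod p) (z : ZMod p) :
    ((Finset.univ.filter
        (fun v : Fin (n + 2) → ZMod p => (heis p n x y z).mulVec v = v)).card : ℂ)
      = (p : ℂ) * ∑ w : Fin n → ZMod p, ∑ t : ZMod p,
          (if zdot x w + z * t = 0 ∧ ∀ i, y i * t = 0 then (1 : ℂ) else 0) := by
  rw [Finset.card_filter]
  push_cast
  rw [← Equiv.sum_comp (vecEquiv p n)
    (fun v => if (heis p n x y z).mulVec v = v then (1 : ℂ) else 0)]
  rw [Fintype.sum_prod_type]
  have key : ∀ (a : ZMod p) (r : (Fin n → ZMod p) × ZMod p),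
      (if (heis p n x y z).mulVec (vecEquiv p n (a, r)) = vecEquiv p n (a, r)
        then (1 : ℂ) else 0)
      = (if zdot x r.1 + z * r.2 = 0 ∧ ∀ i, y i * r.2 = 0 then (1 : ℂ) else 0) := by
    rintro a ⟨w, t⟩
    have hc : ((heis p n x y z).mulVec (vecEquiv p n (a, w, t)) = vecEquiv p n (a, w, t))
        ↔ (zdot x w + z * t = 0 ∧ ∀ i, y i * t = 0) := by
      rw [heis_fixed_iff]
      have h1 : (fun i => vecEquiv p n (a, w, t) (midIdx i)) = w :=
        funext (vecEquiv_mid a w t)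
      rw [h1, vecEquiv_last]
    exact if_congr hc rfl rfl
  simp_rw [key]
  rw [Finset.sum_const, Finset.card_univ, ZMod.card, nsmul_eq_mul]
  rw [Fintype.sum_prod_type]

end Structure

lemma sum_comm3 {A D E M : Type*} [AddCommMonoid M] [Fintype A] [Fintype D] [Fintype E]
    (g : A → D → E → M) :
    ∑ a : A, ∑ d : D, ∑ e : E, g a d e = ∑ d : D, ∑ e : E, ∑ a : A, g a d e := by
  rw [Finset.sum_comm]
  exact Finset.sum_congr rfl fun d _ => Finset.sum_comm

/-- Let `N(x,y,z)` be the number of vectors of `(ℤ/pℤ)^{n+2}` fixed by the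
Heisenberg matrix `A(x,y,z)`.  For `α, β ∈ (ℤ/pℤ)ⁿ`, the sum over all `x, y, z` of
`N(x,y,z)·ω^{−(α·x+β·y)}` equals `(pⁿ + 2(p−1))·p^{2n+1}` if `α = β = 0`;
`(p−1)·p^{2n+1}` if exactly one of `α, β` is zero; and `0` if both are nonzero.
(This is `|G(p,n)|` times the multiplicity of the character `χ_{α,β}` in the permutation
representation of the Heisenberg group.) -/
theorem stmt19 (p n : ℕ) [Fact p.Prime] (hn : 1 ≤ n) (α β : Fin n → ZMod p) :
    (∑ x : Fin n → ZMod p, ∑ y : Fin n → ZMod p, ∑ z : ZMod p,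
      ((Finset.univ.filter
          (fun v : Fin (n + 2) → ZMod p => (heis p n x y z).mulVec v = v)).card : ℂ) *
        heisOmega p ^ (-(zdot α x + zdot β y)).val)
      = if α = 0 ∧ β = 0 then ((p : ℂ) ^ n + 2 * ((p : ℂ) - 1)) * (p : ℂ) ^ (2 * n + 1)
        else if (α = 0 ∧ β ≠ 0) ∨ (α ≠ 0 ∧ β = 0) then ((p : ℂ) - 1) * (p : ℂ) ^ (2 * n + 1)
        else 0 := by
  have hp : 1 < p := (Fact.out : p.Prime).one_lt
  set q : ℂ := (p : ℂ) with hq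
  have hq0 : q ≠ 0 := by
    simp only [hq, Ne, Nat.cast_eq_zero]
    exact (Fact.out : p.Prime).ne_zero
  -- notation
  set XA : ℂ := if α = 0 then q ^ n else 0 with hXA
  set YB : ℂ := if β = 0 then q ^ n else 0 with hYB
  -- the ω-power is a product of characters
  have hpow : ∀ (x y : Fin n → ZMod p),
      heisOmega p ^ (-(zdot α x + zdot β y)).val = hchi p n α x * hchi p n β y := by
    intro x y
    rw [← hpsi_apply, neg_add, AddChar.map_add_eq_mul]
    rfl
  -- the summand in product form
  set F : (Fin n → ZMod p) → (Fin n → ZMod p) → ZMod p → (Fin n → ZMod p) → ZMod p → ℂ :=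
    fun x y z w t =>
      (if zdot x w + z * t = 0 then hchi p n α x else 0) *
      (if ∀ i, y i * t = 0 then hchi p n β y else 0) with hF
  have key : ∀ (x y : Fin n → ZMod p) (z : ZMod p),
      ((Finset.univ.filter
          (fun v : Fin (n + 2) → ZMod p => (heis p n x y z).mulVec v = v)).card : ℂ) *
        heisOmega p ^ (-(zdot α x + zdot β y)).val
      = q * ∑ w : Fin n → ZMod p, ∑ t : ZMod p, F x y z w t := by
    intro x y z
    rw [card_fixed, hpow, mul_assoc]
    congr 1
    rw [Finset.sum_mul]
    refine Finset.sum_congr rfl fun w _ => ?_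
    rw [Finset.sum_mul]
    refine Finset.sum_congr rfl fun t _ => ?_
    simp only [hF]
    by_cases hP : zdot x w + z * t = 0 <;> by_cases hQ : ∀ i, y i * t = 0
    · rw [if_pos (show _ ∧ _ from ⟨hP, hQ⟩), if_pos hP, if_pos hQ, one_mul]
    · rw [if_neg (fun h => hQ h.2), if_pos hP, if_neg hQ, mul_zero, zero_mul]
    · rw [if_neg (fun h => hP h.1), if_neg hP, zero_mul, zero_mul]
    · rw [if_neg (fun h => hP h.1), if_neg hP, zero_mul, zero_mul]
  simp_rw [key, ← Finset.mul_sum]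
  -- swap sums so that w, t are outermost
  have hswap : (∑ x : Fin n → ZMod p, ∑ y : Fin n → ZMod p, ∑ z : ZMod p,
        ∑ w : Fin n → ZMod p, ∑ t : ZMod p, F x y z w t)
      = ∑ w : Fin n → ZMod p, ∑ t : ZMod p,
        ∑ x : Fin n → ZMod p, ∑ y : Fin n → ZMod p, ∑ z : ZMod p, F x y z w t := by
    calc (∑ x : Fin n → ZMod p, ∑ y : Fin n → ZMod p, ∑ z : ZMod p,
          ∑ w : Fin n → ZMod p, ∑ t : ZMod p, F x y z w t)
        = ∑ x : Fin n → ZMod p, ∑ y : Fin n → ZMod p, ∑ w : Fin n → ZMod p, ∑ t : ZMod p,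
            ∑ z : ZMod p, F x y z w t :=
          Finset.sum_congr rfl fun x _ => Finset.sum_congr rfl fun y _ =>
            sum_comm3 (fun z w t => F x y z w t)
      _ = ∑ x : Fin n → ZMod p, ∑ w : Fin n → ZMod p, ∑ t : ZMod p,
            ∑ y : Fin n → ZMod p, ∑ z : ZMod p, F x y z w t :=
          Finset.sum_congr rfl fun x _ =>
            sum_comm3 (fun y w t => ∑ z : ZMod p, F x y z w t)
      _ = ∑ w : Fin n → ZMod p, ∑ t : ZMod p,
            ∑ x : Fin n → ZMod p, ∑ y : Fin n → ZMod p, ∑ z : ZMod p, F x y z w t :=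
          sum_comm3 (fun x w t => ∑ y : Fin n → ZMod p, ∑ z : ZMod p, F x y z w t)
  rw [hswap]
  -- factor the inner sums
  set X : (Fin n → ZMod p) → ZMod p → ℂ := fun w t =>
    ∑ x : Fin n → ZMod p, ∑ z : ZMod p,
      (if zdot x w + z * t = 0 then hchi p n α x else 0) with hX
  set Y : ZMod p → ℂ := fun t =>
    ∑ y : Fin n → ZMod p, (if ∀ i, y i * t = 0 then hchi p n β y else 0) with hY
  have hfact : ∀ w t, (∑ x : Fin n → ZMod p, ∑ y : Fin n → ZMod p, ∑ z : ZMod p, F x y z w t)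
      = X w t * Y t := by
    intro w t
    rw [hX, hY, hF]
    simp only
    rw [Finset.sum_mul]
    refine Finset.sum_congr rfl fun x _ => ?_
    rw [Finset.sum_comm]
    rw [Finset.sum_mul]
    refine Finset.sum_congr rfl fun z _ => ?_
    rw [← Finset.mul_sum]
  simp_rw [hfact]
  -- evaluate Y
  have hY0 : Y 0 = YB := by
    rw [hY, hYB]
    show (∑ y : Fin n → ZMod p, if ∀ i, y i * (0 : ZMod p) = 0 then hchi p n β y else 0) = _
    rw [Finset.sum_congr rfl fun y _ => if_pos fun i => mul_zero (y i)]
    exact sum_hchi p n β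
  have hYne : ∀ t : ZMod p, t ≠ 0 → Y t = 1 := by
    intro t ht
    rw [hY]
    show (∑ y : Fin n → ZMod p, if ∀ i, y i * t = 0 then hchi p n β y else 0) = 1
    have hcond : ∀ y : Fin n → ZMod p, (∀ i, y i * t = 0) ↔ y = 0 := by
      intro y
      constructor
      · intro h
        funext i
        rcases mul_eq_zero.mp (h i) with h' | h'
        · exact h'
        · exact absurd h' ht
      · intro h i
        rw [h]
        simp
    rw [Finset.sum_congr rfl fun y _ => if_congr (hcond y) rfl rfl]
    rw [Finset.sum_ite_eq' Finset.univ (0 : Fin n → ZMod p) (fun y => hchi p n β y)]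
    rw [if_pos (Finset.mem_univ _), hchi_zero_right]
  -- evaluate X for t ≠ 0
  have hXne : ∀ (w : Fin n → ZMod p) (t : ZMod p), t ≠ 0 → X w t = XA := by
    intro w t ht
    rw [hX, hXA]
    show (∑ x : Fin n → ZMod p, ∑ z : ZMod p, if zdot x w + z * t = 0 then hchi p n α x else 0)
      = ite (α = 0) (q ^ n) 0
    have hcond : ∀ (x : Fin n → ZMod p) (z : ZMod p),
        (zdot x w + z * t = 0) ↔ z = -(zdot x w) * t⁻¹ := by
      intro x z
      constructor
      · intro h
        field_simp
        linear_combination h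
      · intro h
        rw [h]
        field_simp
        ring
    have : ∀ x : Fin n → ZMod p,
        (∑ z : ZMod p, if zdot x w + z * t = 0 then hchi p n α x else 0) = hchi p n α x := by
      intro x
      rw [Finset.sum_congr rfl fun z _ => if_congr (hcond x z) rfl rfl]
      rw [Finset.sum_ite_eq' Finset.univ (-(zdot x w) * t⁻¹) (fun _ => hchi p n α x)]
      rw [if_pos (Finset.mem_univ _)]
    simp_rw [this]
    exact sum_hchi p n α
  -- evaluate X at t = 0
  set H : (Fin n → ZMod p) → ℂ := fun w =>
    ∑ x : Fin n → ZMod p, (if zdot x w = 0 then hchi p n α x else 0) with hH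
  have hX0 : ∀ w : Fin n → ZMod p, X w 0 = q * H w := by
    intro w
    rw [hX, hH]
    show (∑ x : Fin n → ZMod p, ∑ z : ZMod p, if zdot x w + z * 0 = 0 then hchi p n α x else 0)
      = q * ∑ x : Fin n → ZMod p, (if zdot x w = 0 then hchi p n α x else 0)
    simp only [mul_zero, add_zero]
    rw [Finset.sum_congr rfl fun x _ => Finset.sum_const _]
    simp only [Finset.card_univ, ZMod.card, nsmul_eq_mul]
    rw [Finset.mul_sum]
  -- the sum of H over w
  have hsumH : ∑ w : Fin n → ZMod p, H w = XA * (q ^ n / q) + (q ^ n - q ^ n / q) := by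
    rw [hH]
    show (∑ w : Fin n → ZMod p, ∑ x : Fin n → ZMod p, if zdot x w = 0 then hchi p n α x else 0)
      = _
    rw [Finset.sum_comm]
    have hK : ∀ x : Fin n → ZMod p,
        (∑ w : Fin n → ZMod p, if zdot x w = 0 then (1:ℂ) else 0)
          = if x = 0 then q ^ n else q ^ n / q := by
      intro x
      have hind : ∀ a : ZMod p, (if a = 0 then (1:ℂ) else 0)
          = (∑ c : ZMod p, hpsi p (c * a)) / q := by
        intro a
        rw [sum_hpsi_mul]
        by_cases h : a = 0
        · rw [if_pos h, if_pos h, div_self hq0]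
        · rw [if_neg h, if_neg h, zero_div]
      rw [Finset.sum_congr rfl fun w _ => hind (zdot x w)]
      rw [← Finset.sum_div]
      rw [Finset.sum_comm]
      have hz : ∀ (c : ZMod p) (w : Fin n → ZMod p),
          c * zdot x w = zdot (fun i => c * x i) w := by
        intro c w
        rw [zdot, zdot, Finset.mul_sum]
        exact Finset.sum_congr rfl fun i _ => by ring
      rw [Finset.sum_congr rfl fun c _ => Finset.sum_congr rfl fun w _ =>
        congrArg (hpsi p) (hz c w)]
      rw [Finset.sum_congr rfl fun c _ => sum_hpsi_dot p n (fun i => c * x i)]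
      by_cases hx : x = 0
      · have : ∀ c : ZMod p, (fun i => c * x i) = 0 := by
          intro c; funext i; rw [hx]; simp
        rw [Finset.sum_congr rfl fun c _ => if_pos (this c)]
        rw [if_pos hx]
        rw [Finset.sum_const, Finset.card_univ, ZMod.card, nsmul_eq_mul]
        field_simp
        rfl
      · have hcc : ∀ c : ZMod p, ((fun i => c * x i) = 0) ↔ c = 0 := by
          intro c
          constructor
          · intro h
            by_contra hc
            apply hx
            funext i
            have := congrFun h i
            simp only [Pi.zero_apply] at this
            rcases mul_eq_zero.mp this with h' | h'
            · exact absurd h' hc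
            · exact h'
          · intro h
            funext i
            rw [h, zero_mul]
            rfl
        rw [Finset.sum_congr rfl fun c _ => if_congr (hcc c) rfl rfl]
        rw [Finset.sum_ite_eq' Finset.univ (0 : ZMod p) (fun _ => q ^ n)]
        rw [if_pos (Finset.mem_univ _), if_neg hx]
    have hsplit : ∀ x : Fin n → ZMod p,
        (∑ w : Fin n → ZMod p, if zdot x w = 0 then hchi p n α x else 0)
        = hchi p n α x * (if x = 0 then q ^ n else q ^ n / q) := by
      intro x
      rw [← hK x, Finset.mul_sum]
      exact Finset.sum_congr rfl fun w _ => by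
        by_cases h : zdot x w = 0 <;> simp [h]
    simp_rw [hsplit]
    have hdecomp : ∀ x : Fin n → ZMod p,
        hchi p n α x * (if x = 0 then q ^ n else q ^ n / q)
        = hchi p n α x * (q ^ n / q) + (if x = 0 then hchi p n α x * (q ^ n - q ^ n / q) else 0) := by
      intro x
      by_cases h : x = 0 <;> simp [h] <;> ring
    simp_rw [hdecomp]
    rw [Finset.sum_add_distrib, ← Finset.sum_mul, sum_hchi]
    rw [Finset.sum_ite_eq' Finset.univ (0 : Fin n → ZMod p)
      (fun x => hchi p n α x * (q ^ n - q ^ n / q))]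
    rw [if_pos (Finset.mem_univ _), hchi_zero_right, one_mul]
  -- split the t-sum at t = 0
  have hsplitT : ∀ w : Fin n → ZMod p,
      (∑ t : ZMod p, X w t * Y t) = q * H w * YB + (q - 1) * XA := by
    intro w
    rw [← Finset.add_sum_erase Finset.univ (fun t => X w t * Y t) (Finset.mem_univ (0 : ZMod p))]
    rw [hX0, hY0]
    congr 1
    have : ∀ t ∈ Finset.univ.erase (0 : ZMod p), X w t * Y t = XA := by
      intro t ht
      have ht' : t ≠ 0 := Finset.ne_of_mem_erase ht
      rw [hXne w t ht', hYne t ht', mul_one]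
    rw [Finset.sum_congr rfl this, Finset.sum_const]
    rw [Finset.card_erase_of_mem (Finset.mem_univ _), Finset.card_univ, ZMod.card]
    rw [nsmul_eq_mul, Nat.cast_sub hp.le, Nat.cast_one]
  simp_rw [hsplitT]
  rw [Finset.sum_add_distrib, Finset.sum_const, Finset.card_univ, Fintype.card_fun,
    ZMod.card, Fintype.card_fin, nsmul_eq_mul]
  have hw : ∑ w : Fin n → ZMod p, q * H w * YB = q * YB * ∑ w : Fin n → ZMod p, H w := by
    rw [Finset.mul_sum]
    exact Finset.sum_congr rfl fun w _ => by ring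
  rw [hw, hsumH]
  push_cast
  -- final case analysis
  by_cases hα : α = 0 <;> by_cases hβ : β = 0
  · rw [if_pos ⟨hα, hβ⟩, hXA, hYB, if_pos hα, if_pos hβ]
    field_simp
    ring
  · rw [if_neg (fun h => hβ h.2), if_pos (Or.inl ⟨hα, hβ⟩), hXA, hYB, if_pos hα, if_neg hβ]
    field_simp
    ring
  · rw [if_neg (fun h => hα h.1), if_pos (Or.inr ⟨hα, hβ⟩), hXA, hYB, if_neg hα, if_pos hβ]
    field_simp
    ring
  · rw [if_neg (fun h => hα h.1), if_neg (by rintro (⟨h, _⟩ | ⟨_, h⟩); exacts [hα h, hβ h]),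
      hXA, hYB, if_neg hα, if_neg hβ]
    ring
end
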